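/- arXiv:2105.03064 — 5 statements merged into one kernel-verified Lean document; each statement's English description precedes it below -/
import Mathlib

section
/- If det P ≠ 0, then for every state S ⊆ [n], ∑_{i=1}^{n+1} μ_i·f([i:n],S) ≤ μ_p; that is, all the KKT multipliers σ_S = μ_p − ∑_{i=1}^{n+1} μ_i·f([i:n],S) are nonnegative. -/
open Finset
open Fin.NatCast

/-- The η×η shift-type block `D^{η−m}` over GF(2): entry (i,j) is 1 iff
`j < m` and `i = j + (η − m)`. -/
def Dblk (η m : ℕ) : Matrix (Fin η) (Fin η) (ZMod 2) :=
  Matrix.of fun i j => if (j : ℕ) < m ∧ (i : ℕ) = (j : ℕ) + (η - m) then 1 else 0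

/-- Row-block index set of the transfer matrix: `{d} ∪ (Ωᶜ ∩ Sᶜ)`, with `0`
playing the role of the destination `d` and relays being `1,…,n`. -/
def rowIdx (n : ℕ) (Ω S : Finset ℕ) : Finset ℕ :=
  insert 0 ((Finset.Icc 1 n \ Ω) \ S)

/-- Column-block index set of the transfer matrix: `{s} ∪ (Ω ∩ S)`, with `0`
playing the role of the source `s`. -/
def colIdx (Ω S : Finset ℕ) : Finset ℕ :=
  insert 0 (Ω ∩ S)

/-- `f(Ω,S)`: rank over GF(2) of the transfer matrix `F_{Ω,S}`, whose block in
row block `i` and column block `j` is `D^{η−ℓ i j}` (here `ℓ i j` encodes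
`ℓ_{i,j}`, with index `0` standing for `d` in the first slot and for `s` in the
second slot). -/
noncomputable def fRank (n η : ℕ) (ℓ : ℕ → ℕ → ℕ) (Ω S : Finset ℕ) : ℕ :=
  Matrix.rank
    (Matrix.of fun (p : ↥(rowIdx n Ω S) × Fin η) (q : ↥(colIdx Ω S) × Fin η) =>
      Dblk η (ℓ (p.1 : ℕ) (q.1 : ℕ)) p.2 q.2)

/-- The `(n+2) × (n+2)` real matrix `P`. -/
noncomputable def Pmat (n η : ℕ) (ℓ : ℕ → ℕ → ℕ) : Matrix (Fin (n+2)) (Fin (n+2)) ℝ :=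
  Matrix.of fun i j =>
    if (i : ℕ) = 0 then (if (j : ℕ) = 0 then 0 else 1)
    else if (j : ℕ) = 0 then 1
    else -(fRank n η ℓ (Finset.Icc (i : ℕ) n)
        (if (j : ℕ) = n + 1 then (∅ : Finset ℕ) else {(j : ℕ)}) : ℝ)

/-- `P̃_i`: determinant of the submatrix of `P` obtained by deleting row `0`
and column `i`. -/
noncomputable def Pminor (n η : ℕ) (ℓ : ℕ → ℕ → ℕ) (i : Fin (n+2)) : ℝ :=
  ((Pmat n η ℓ).submatrix Fin.succ i.succAbove).det

/-- Feasibility for the LP defining the approximate capacity `C^LD`. -/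
def FeasLD (n η : ℕ) (ℓ : ℕ → ℕ → ℕ) (t : ℝ) (lam : Finset ℕ → ℝ) : Prop :=
  (∀ S ⊆ Finset.Icc 1 n, 0 ≤ lam S) ∧
  (∑ S ∈ (Finset.Icc 1 n).powerset, lam S) ≤ 1 ∧
  ∀ Ω ⊆ Finset.Icc 1 n,
    t ≤ ∑ S ∈ (Finset.Icc 1 n).powerset, lam S * (fRank n η ℓ Ω S : ℝ)

/-- The approximate capacity `C^LD`. -/
noncomputable def CLD (n η : ℕ) (ℓ : ℕ → ℕ → ℕ) : ℝ :=
  sSup {t : ℝ | ∃ lam, FeasLD n η ℓ t lam}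

/-- Feasibility for the relaxed LP defining `C^U`. -/
def FeasU (n η : ℕ) (ℓ : ℕ → ℕ → ℕ) (t : ℝ) (lam : Finset ℕ → ℝ) : Prop :=
  (∀ S ⊆ Finset.Icc 1 n, 0 ≤ lam S) ∧
  (∑ S ∈ (Finset.Icc 1 n).powerset, lam S) ≤ 1 ∧
  ∀ i ∈ Finset.Icc 1 (n+1),
    t ≤ ∑ S ∈ (Finset.Icc 1 n).powerset, lam S * (fRank n η ℓ (Finset.Icc i n) S : ℝ)

/-- The relaxed value `C^U`. -/
noncomputable def CU (n η : ℕ) (ℓ : ℕ → ℕ → ℕ) : ℝ :=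
  sSup {t : ℝ | ∃ lam, FeasU n η ℓ t lam}

/-- The set `Ŝ = {∅, {1}, …, {n}}` of states with at most one relay transmitting. -/
def SHat (n : ℕ) : Finset (Finset ℕ) :=
  insert ∅ ((Finset.Icc 1 n).image fun i => {i})

/-- The schedule `λ*` induced by a solution vector `v = (t*, λ*_{{1}}, …, λ*_{{n}}, λ*_∅)`
of the linear system `P·v = e₀`: it assigns `v i` to the state `{i}` (for `i ∈ [n]`),
`v (n+1)` to `∅`, and `0` to any other state. -/
noncomputable def lamStar (n : ℕ) (v : Fin (n+2) → ℝ) (S : Finset ℕ) : ℝ :=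
  (if S = ∅ then v (Fin.last (n+1)) else 0) +
  ∑ i ∈ Finset.Icc 1 n, if S = {i} then v (i : Fin (n+2)) else 0



/-! ### Auxiliary machinery -/

section generic
variable {K : Type*} [Field K]

lemma rank_submatrix_le_gen {m m' n n' : Type*} [Fintype n] [Fintype n']
    (A : Matrix m n K) (f : m' → m) (g : n' → n) :
    (A.submatrix f g).rank ≤ A.rank := by
  classical
  rw [Matrix.rank_eq_finrank_span_cols, Matrix.rank_eq_finrank_span_cols]
  haveI : Module.Finite K (Submodule.span K (Set.range A.transpose)) :=
    Module.Finite.span_of_finite K (Set.finite_range _)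
  have h1 : Set.range (A.submatrix f g).transpose
      ⊆ (LinearMap.funLeft K K f) '' (Set.range A.transpose) := by
    rintro _ ⟨j, rfl⟩
    exact ⟨A.transpose (g j), ⟨g j, rfl⟩, rfl⟩
  calc Module.finrank K (Submodule.span K (Set.range (A.submatrix f g).transpose))
      ≤ Module.finrank K (Submodule.span K ((LinearMap.funLeft K K f) '' (Set.range A.transpose))) := by
        haveI : Module.Finite K (Submodule.span K ((LinearMap.funLeft K K f) '' (Set.range A.transpose))) := by
          apply Module.Finite.span_of_finite
          exact (Set.finite_range _).image _
        exact Submodule.finrank_mono (Submodule.span_mono h1)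
    _ = Module.finrank K (Submodule.map (LinearMap.funLeft K K f) (Submodule.span K (Set.range A.transpose))) := by
        rw [Submodule.map_span]
    _ ≤ Module.finrank K (Submodule.span K (Set.range A.transpose)) :=
        Submodule.finrank_map_le _ _

end generic

lemma rank_single {ρ γ : Type*} [Fintype ρ] [Fintype γ] [Nonempty γ] [Subsingleton γ]
    (η : ℕ) (w : ρ → ℕ) (M : ℕ) (hM : M ≤ η) (a₀ : ρ) (ha₀ : w a₀ = M)
    (hdom : ∀ a, w a ≤ M) :
    (Matrix.of fun (p : ρ × Fin η) (q : γ × Fin η) => Dblk η (w p.1) p.2 q.2).rank = M := by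
  classical
  set A : Matrix (ρ × Fin η) (γ × Fin η) (ZMod 2) :=
    Matrix.of fun (p : ρ × Fin η) (q : γ × Fin η) => Dblk η (w p.1) p.2 q.2 with hA
  obtain ⟨g₀⟩ := ‹Nonempty γ›
  have hlow : M ≤ A.rank := by
    rcases Nat.eq_zero_or_pos M with hM0 | hMpos
    · omega
    have hι : ∀ c : Fin M, (c : ℕ) + (η - M) < η := fun c => by omega
    set v : Fin M → (ρ × Fin η → ZMod 2) :=
      fun c => A.transpose (g₀, ⟨(c : ℕ), lt_of_lt_of_le c.2 hM⟩) with hv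
    have hmem : ∀ c, v c ∈ Set.range A.transpose := fun c => ⟨_, rfl⟩
    have hli : LinearIndependent (ZMod 2) v := by
      apply LinearIndependent.of_comp
        (LinearMap.funLeft (ZMod 2) (ZMod 2) (fun r : Fin η => ((a₀, r) : ρ × Fin η)))
      have heq : (LinearMap.funLeft (ZMod 2) (ZMod 2)
          (fun r : Fin η => ((a₀, r) : ρ × Fin η))) ∘ v
          = fun c : Fin M => Pi.single (⟨(c : ℕ) + (η - M), hι c⟩ : Fin η) (1 : ZMod 2) := by
        funext c r
        simp only [Function.comp, LinearMap.funLeft_apply, hv, hA, Matrix.transpose_apply,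
          Matrix.of_apply, Dblk, ha₀]
        by_cases h : (r : ℕ) = (c : ℕ) + (η - M)
        · have hr : r = (⟨(c : ℕ) + (η - M), hι c⟩ : Fin η) := Fin.ext h
          rw [hr, Pi.single_eq_same, if_pos]
          exact ⟨lt_of_lt_of_le c.2 (le_refl M), by simpa using h⟩
        · rw [Pi.single_eq_of_ne (fun hc => h (by rw [hc])), if_neg]
          rintro ⟨-, h2⟩; exact h (by simpa using h2)
      rw [heq]
      have hinj : Function.Injective (fun c : Fin M => (⟨(c : ℕ) + (η - M), hι c⟩ : Fin η)) := by
        intro c c' h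
        have := Fin.val_eq_of_eq h
        simp only at this
        exact Fin.ext (by omega)
      have hbl := (Pi.basisFun (ZMod 2) (Fin η)).linearIndependent.comp _ hinj
      simpa only [Function.comp_def, Pi.basisFun_apply] using hbl
    rw [Matrix.rank_eq_finrank_span_cols]
    calc M = Module.finrank (ZMod 2) (Submodule.span (ZMod 2) (Set.range v)) := by
            rw [finrank_span_eq_card hli, Fintype.card_fin]
      _ ≤ _ := by
            haveI : Module.Finite (ZMod 2) (Submodule.span (ZMod 2) (Set.range A.transpose)) :=
              Module.Finite.span_of_finite _ (Set.finite_range _)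
            exact Submodule.finrank_mono (Submodule.span_mono (Set.range_subset_iff.2 hmem))
  have hup : A.rank ≤ M := by
    rw [Matrix.rank_eq_finrank_span_cols]
    set u : Fin M → (ρ × Fin η → ZMod 2) :=
      fun c => A.transpose (g₀, ⟨(c : ℕ), lt_of_lt_of_le c.2 hM⟩) with hu
    have hss : Set.range A.transpose ⊆ Submodule.span (ZMod 2) (Set.range u) := by
      rintro _ ⟨⟨g, c⟩, rfl⟩
      by_cases hc : (c : ℕ) < M
      · apply Submodule.subset_span
        refine ⟨⟨(c : ℕ), hc⟩, ?_⟩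
        simp only [hu]
        congr 1
        exact Prod.ext (Subsingleton.elim _ _) rfl
      · have hz : A.transpose (g, c) = 0 := by
          funext p
          simp only [Matrix.transpose_apply, hA, Matrix.of_apply, Dblk, Pi.zero_apply]
          rw [if_neg]
          rintro ⟨h1, -⟩
          exact hc (lt_of_lt_of_le h1 (hdom p.1))
        rw [hz]; exact Submodule.zero_mem _
    calc Module.finrank (ZMod 2) (Submodule.span (ZMod 2) (Set.range A.transpose))
        ≤ Module.finrank (ZMod 2) (Submodule.span (ZMod 2) (Set.range u)) := by
          haveI : Module.Finite (ZMod 2) (Submodule.span (ZMod 2) (Set.range u)) :=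
            Module.Finite.span_of_finite _ (Set.finite_range _)
          exact Submodule.finrank_mono (Submodule.span_le.2 hss)
      _ ≤ M := by
          refine le_trans (finrank_span_le_card (R := ZMod 2) (Set.range u)) ?_
          rw [Set.toFinset_range]
          exact le_trans (Finset.card_image_le) (by simp)
  omega

section machinery
variable (n η : ℕ) (ℓ : ℕ → ℕ → ℕ)

def Tf (n : ℕ) : Finset ℕ := insert 0 (Finset.Icc 1 n)

def matFor (η : ℕ) (ℓ : ℕ → ℕ → ℕ) (R C : Finset ℕ) :
    Matrix (↥R × Fin η) (↥C × Fin η) (ZMod 2) :=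
  Matrix.of fun p q => Dblk η (ℓ (p.1 : ℕ) (q.1 : ℕ)) p.2 q.2

lemma fRank_eq_matFor (Ω S : Finset ℕ) :
    fRank n η ℓ Ω S = (matFor η ℓ (rowIdx n Ω S) (colIdx Ω S)).rank := rfl

lemma rank_matFor_congr {R R' C C' : Finset ℕ} (hR : R = R') (hC : C = C') :
    (matFor η ℓ R C).rank = (matFor η ℓ R' C').rank := by subst hR; subst hC; rfl

def fullCol (b : ℕ) (c : Fin η) : (↥(Tf n) × Fin η) → ZMod 2 :=
  fun p => Dblk η (ℓ (p.1 : ℕ) b) p.2 c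

def Wsp (C : Finset ℕ) : Submodule (ZMod 2) ((↥(Tf n) × Fin η) → ZMod 2) :=
  Submodule.span _ (⋃ b ∈ (C : Set ℕ), Set.range (fullCol n η ℓ b))

def Ksp (R : Finset ℕ) : Submodule (ZMod 2) ((↥(Tf n) × Fin η) → ZMod 2) where
  carrier := {v | ∀ p : ↥(Tf n) × Fin η, ((p.1 : ℕ) ∈ R) → v p = 0}
  add_mem' := by
    intro v w hv hw p hp
    simp only [Pi.add_apply, hv p hp, hw p hp, add_zero]
  zero_mem' := fun p _ => rfl
  smul_mem' := by
    intro c v hv p hp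
    simp only [Pi.smul_apply, hv p hp, smul_zero]

lemma mem_Ksp {R : Finset ℕ} {v : (↥(Tf n) × Fin η) → ZMod 2} :
    v ∈ Ksp n η R ↔ ∀ p : ↥(Tf n) × Fin η, ((p.1 : ℕ) ∈ R) → v p = 0 := Iff.rfl

lemma Wsp_union (C C' : Finset ℕ) :
    Wsp n η ℓ (C ∪ C') = Wsp n η ℓ C ⊔ Wsp n η ℓ C' := by
  unfold Wsp
  rw [Finset.coe_union, Set.biUnion_union, Submodule.span_union]

lemma Wsp_mono {C C' : Finset ℕ} (h : C ⊆ C') : Wsp n η ℓ C ≤ Wsp n η ℓ C' := by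
  apply Submodule.span_mono
  exact Set.biUnion_subset_biUnion_left (by exact_mod_cast h)

lemma Ksp_antitone {R R' : Finset ℕ} (h : R ⊆ R') : Ksp n η R' ≤ Ksp n η R :=
  fun v hv p hp => hv p (h hp)

lemma Ksp_inter (R R' : Finset ℕ) :
    Ksp n η (R ∩ R') = Ksp n η R ⊔ Ksp n η R' := by
  classical
  apply le_antisymm
  · intro v hv
    set v1 : (↥(Tf n) × Fin η) → ZMod 2 :=
      fun p => if (p.1 : ℕ) ∈ R then 0 else v p with hv1
    have h1 : v1 ∈ Ksp n η R := fun p hp => if_pos hp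
    have h2 : v - v1 ∈ Ksp n η R' := by
      intro p hp
      by_cases h : (p.1 : ℕ) ∈ R
      · have := hv p (Finset.mem_inter.2 ⟨h, hp⟩)
        simp [hv1, h, this]
      · simp [hv1, h]
    have hsplit : v = v1 + (v - v1) := by ring
    rw [hsplit]
    exact Submodule.add_mem_sup h1 h2
  · apply sup_le
    · exact Ksp_antitone n η (Finset.inter_subset_left)
    · exact Ksp_antitone n η (Finset.inter_subset_right)

lemma g_submod (R R' C C' : Finset ℕ) :
    Module.finrank (ZMod 2) ↥(Wsp n η ℓ (C ∪ C') ⊔ Ksp n η (R ∩ R'))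
      + Module.finrank (ZMod 2) ↥(Wsp n η ℓ (C ∩ C') ⊔ Ksp n η (R ∪ R'))
    ≤ Module.finrank (ZMod 2) ↥(Wsp n η ℓ C ⊔ Ksp n η R)
      + Module.finrank (ZMod 2) ↥(Wsp n η ℓ C' ⊔ Ksp n η R') := by
  classical
  have hsup : (Wsp n η ℓ C ⊔ Ksp n η R) ⊔ (Wsp n η ℓ C' ⊔ Ksp n η R')
      = Wsp n η ℓ (C ∪ C') ⊔ Ksp n η (R ∩ R') := by
    rw [Wsp_union, Ksp_inter, sup_sup_sup_comm]
  have hinf : Wsp n η ℓ (C ∩ C') ⊔ Ksp n η (R ∪ R')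
      ≤ (Wsp n η ℓ C ⊔ Ksp n η R) ⊓ (Wsp n η ℓ C' ⊔ Ksp n η R') := by
    apply le_inf
    · exact sup_le_sup (Wsp_mono n η ℓ Finset.inter_subset_left)
        (Ksp_antitone n η Finset.subset_union_left)
    · exact sup_le_sup (Wsp_mono n η ℓ Finset.inter_subset_right)
        (Ksp_antitone n η Finset.subset_union_right)
  have heq := Submodule.finrank_sup_add_finrank_inf_eq
    (Wsp n η ℓ C ⊔ Ksp n η R) (Wsp n η ℓ C' ⊔ Ksp n η R')
  rw [hsup] at heq
  have hm := Submodule.finrank_mono (s := Wsp n η ℓ (C ∩ C') ⊔ Ksp n η (R ∪ R')) hinf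
  omega

lemma rank_matFor_eq (R C : Finset ℕ) (hR : R ⊆ Tf n) :
    (matFor η ℓ R C).rank + Module.finrank (ZMod 2) ↥(Ksp n η R)
      = Module.finrank (ZMod 2) ↥(Wsp n η ℓ C ⊔ Ksp n η R) := by
  classical
  set emb : ↥R × Fin η → ↥(Tf n) × Fin η :=
    fun p => (⟨(p.1 : ℕ), hR p.1.2⟩, p.2) with hemb
  set π : ((↥(Tf n) × Fin η) → ZMod 2) →ₗ[ZMod 2] ((↥R × Fin η) → ZMod 2) :=
    LinearMap.funLeft (ZMod 2) (ZMod 2) emb with hπ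
  have hker : LinearMap.ker π = Ksp n η R := by
    ext v
    simp only [LinearMap.mem_ker, mem_Ksp, funext_iff, hπ, LinearMap.funLeft_apply,
      Pi.zero_apply]
    constructor
    · intro h p hp
      have := h (⟨(p.1 : ℕ), hp⟩, p.2)
      simpa [hemb] using this
    · intro h p
      exact h (emb p) (by simp [hemb])
  have hcols : Set.range (matFor η ℓ R C).transpose
      = π '' (⋃ b ∈ (C : Set ℕ), Set.range (fullCol n η ℓ b)) := by
    ext u
    constructor
    · rintro ⟨q, rfl⟩
      refine ⟨fullCol n η ℓ (q.1 : ℕ) q.2, ?_, rfl⟩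
      exact Set.mem_biUnion (q.1.2 : ((q.1 : ℕ) ∈ (C : Set ℕ))) ⟨q.2, rfl⟩
    · rintro ⟨w, hw, rfl⟩
      obtain ⟨b, hb, c, rfl⟩ := by
        simpa only [Set.mem_iUnion, Set.mem_range, exists_prop] using hw
      exact ⟨((⟨b, hb⟩ : ↥C), c), rfl⟩
  have hrank : (matFor η ℓ R C).rank
      = Module.finrank (ZMod 2) ↥(Submodule.map π (Wsp n η ℓ C)) := by
    rw [Matrix.rank_eq_finrank_span_cols,
      show Set.range (matFor η ℓ R C).col = Set.range (matFor η ℓ R C).transpose from rfl,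
      hcols, ← Submodule.map_span]
    rfl
  have hmapsup : Submodule.map π (Wsp n η ℓ C ⊔ Ksp n η R)
      = Submodule.map π (Wsp n η ℓ C) := by
    rw [Submodule.map_sup, ← hker]
    have hbot : Submodule.map π (LinearMap.ker π) = ⊥ := by
      apply le_bot_iff.1
      rintro _ ⟨v, hv, rfl⟩
      simpa using hv
    rw [hbot, sup_bot_eq]
  set X := Wsp n η ℓ C ⊔ Ksp n η R with hX
  have hrn := LinearMap.finrank_range_add_finrank_ker (π.domRestrict X)
  rw [LinearMap.range_domRestrict, LinearMap.ker_domRestrict] at hrn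
  have hker_le : LinearMap.ker π ≤ X := by rw [hker]; exact le_sup_right
  have hkd : Module.finrank (ZMod 2) ↥(Submodule.comap X.subtype (LinearMap.ker π))
      = Module.finrank (ZMod 2) ↥(Ksp n η R) := by
    rw [← hker]
    exact LinearEquiv.finrank_eq (Submodule.comapSubtypeEquivOfLe hker_le)
  rw [hkd, hmapsup, ← hrank] at hrn
  omega

lemma finrank_Ksp (R : Finset ℕ) (hR : R ⊆ Tf n) :
    Module.finrank (ZMod 2) ↥(Ksp n η R) + R.card * η = (Tf n).card * η := by
  classical
  set emb : ↥R × Fin η → ↥(Tf n) × Fin η :=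
    fun p => (⟨(p.1 : ℕ), hR p.1.2⟩, p.2) with hemb
  have hinj : Function.Injective emb := by
    rintro ⟨⟨a, ha⟩, r⟩ ⟨⟨a', ha'⟩, r'⟩ h
    simp only [hemb, Prod.mk.injEq, Subtype.mk.injEq] at h
    simp [Prod.ext_iff, Subtype.ext_iff, h.1, h.2]
  set π : ((↥(Tf n) × Fin η) → ZMod 2) →ₗ[ZMod 2] ((↥R × Fin η) → ZMod 2) :=
    LinearMap.funLeft (ZMod 2) (ZMod 2) emb with hπ
  have hker : LinearMap.ker π = Ksp n η R := by
    ext v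
    simp only [LinearMap.mem_ker, mem_Ksp, funext_iff, hπ, LinearMap.funLeft_apply,
      Pi.zero_apply]
    constructor
    · intro h p hp
      have := h (⟨(p.1 : ℕ), hp⟩, p.2)
      simpa [hemb] using this
    · intro h p
      exact h (emb p) (by simp [hemb])
  have hsurj : Function.Surjective π :=
    LinearMap.funLeft_surjective_of_injective _ _ _ hinj
  have hrn := LinearMap.finrank_range_add_finrank_ker π
  rw [LinearMap.range_eq_top.2 hsurj, hker] at hrn
  have h1 : Module.finrank (ZMod 2) ↥(⊤ : Submodule (ZMod 2) ((↥R × Fin η) → ZMod 2))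
      = R.card * η := by
    rw [finrank_top, Module.finrank_pi, Fintype.card_prod, Fintype.card_coe, Fintype.card_fin]
  have h2 : Module.finrank (ZMod 2) ((↥(Tf n) × Fin η) → ZMod 2) = (Tf n).card * η := by
    rw [Module.finrank_pi, Fintype.card_prod, Fintype.card_coe, Fintype.card_fin]
  omega

lemma rowIdx_subset_Tf (Ω S : Finset ℕ) : rowIdx n Ω S ⊆ Tf n := by
  intro x hx
  simp only [rowIdx, Finset.mem_insert, Finset.mem_sdiff] at hx
  rcases hx with rfl | ⟨⟨h, -⟩, -⟩
  · exact Finset.mem_insert_self _ _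
  · exact Finset.mem_insert_of_mem h

lemma fRank_submod (Ω S S' : Finset ℕ) :
    fRank n η ℓ Ω (S ∪ S') + fRank n η ℓ Ω (S ∩ S')
      ≤ fRank n η ℓ Ω S + fRank n η ℓ Ω S' := by
  classical
  have hRu : rowIdx n Ω (S ∪ S') = rowIdx n Ω S ∩ rowIdx n Ω S' := by
    ext x
    simp only [rowIdx, Finset.mem_insert, Finset.mem_sdiff, Finset.mem_inter,
      Finset.mem_union]
    tauto
  have hRi : rowIdx n Ω (S ∩ S') = rowIdx n Ω S ∪ rowIdx n Ω S' := by
    ext x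
    simp only [rowIdx, Finset.mem_insert, Finset.mem_sdiff, Finset.mem_inter,
      Finset.mem_union]
    tauto
  have hCu : colIdx Ω (S ∪ S') = colIdx Ω S ∪ colIdx Ω S' := by
    ext x
    simp only [colIdx, Finset.mem_insert, Finset.mem_inter, Finset.mem_union]
    tauto
  have hCi : colIdx Ω (S ∩ S') = colIdx Ω S ∩ colIdx Ω S' := by
    ext x
    simp only [colIdx, Finset.mem_insert, Finset.mem_inter]
    tauto
  set R := rowIdx n Ω S with hRdef
  set R' := rowIdx n Ω S' with hRdef'
  set C := colIdx Ω S with hCdef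
  set C' := colIdx Ω S' with hCdef'
  have hRsub : R ⊆ Tf n := rowIdx_subset_Tf n Ω S
  have hRsub' : R' ⊆ Tf n := rowIdx_subset_Tf n Ω S'
  have hRusub : R ∩ R' ⊆ Tf n := fun x hx => hRsub (Finset.mem_inter.1 hx).1
  have hRisub : R ∪ R' ⊆ Tf n := Finset.union_subset hRsub hRsub'
  rw [fRank_eq_matFor, fRank_eq_matFor, fRank_eq_matFor, fRank_eq_matFor,
    rank_matFor_congr η ℓ hRu hCu, rank_matFor_congr η ℓ hRi hCi, ← hRdef, ← hRdef',
    ← hCdef, ← hCdef']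
  have e1 := rank_matFor_eq n η ℓ (R ∩ R') (C ∪ C') hRusub
  have e2 := rank_matFor_eq n η ℓ (R ∪ R') (C ∩ C') hRisub
  have e3 := rank_matFor_eq n η ℓ R C hRsub
  have e4 := rank_matFor_eq n η ℓ R' C' hRsub'
  have k1 := finrank_Ksp n η (R ∩ R') hRusub
  have k2 := finrank_Ksp n η (R ∪ R') hRisub
  have k3 := finrank_Ksp n η R hRsub
  have k4 := finrank_Ksp n η R' hRsub'
  have hg := g_submod n η ℓ R R' C C'
  have hcard : (R ∩ R').card + (R ∪ R').card = R.card + R'.card :=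
    Finset.card_inter_add_card_union R R'
  have hcard' : (R ∩ R').card * η + (R ∪ R').card * η = R.card * η + R'.card * η := by
    rw [← add_mul, ← add_mul, hcard]
  omega

end machinery

section evals2
variable (n η : ℕ) (ℓ : ℕ → ℕ → ℕ)

lemma rank_matFor_mono_col (R C C' : Finset ℕ) (h : C ⊆ C') :
    (matFor η ℓ R C).rank ≤ (matFor η ℓ R C').rank := by
  have heq : matFor η ℓ R C
      = (matFor η ℓ R C').submatrix id (fun q => (⟨(q.1 : ℕ), h q.1.2⟩, q.2)) := rfl
  rw [heq]
  exact rank_submatrix_le_gen _ _ _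

lemma rank_matFor_singlecol (R : Finset ℕ) (m : ℕ) (hmem : m ∈ R)
    (hdom : ∀ x ∈ R, ℓ x 0 ≤ ℓ m 0) (hη : ℓ m 0 ≤ η) :
    (matFor η ℓ R ({0} : Finset ℕ)).rank = ℓ m 0 := by
  haveI hne : Nonempty ↥({0} : Finset ℕ) := ⟨⟨0, by simp⟩⟩
  haveI hss : Subsingleton ↥({0} : Finset ℕ) := by
    constructor
    rintro ⟨a, ha⟩ ⟨b, hb⟩
    simp only [Finset.mem_singleton] at ha hb
    subst ha; subst hb; rfl
  have hmat : matFor η ℓ R ({0} : Finset ℕ)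
      = Matrix.of (fun (p : ↥R × Fin η) (q : ↥({0} : Finset ℕ) × Fin η) =>
          Dblk η ((fun a : ↥R => ℓ (a : ℕ) 0) p.1) p.2 q.2) := by
    apply congrArg Matrix.of
    funext p q
    have hq : ((q.1 : ℕ)) = 0 := Finset.mem_singleton.1 q.1.2
    simp only [hq]
  rw [hmat]
  exact rank_single η (fun a : ↥R => ℓ (a : ℕ) 0) (ℓ m 0) hη ⟨m, hmem⟩ rfl
    (fun a => hdom _ a.2)

end evals2

section parts
variable {n η : ℕ} {ℓ : ℕ → ℕ → ℕ}
variable (hbound : ∀ i ≤ n, ∀ j ≤ n, ℓ i j ≤ η)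
variable (hds : ℓ 0 0 = 0) (hmono : ∀ i j, 1 ≤ i → i ≤ j → j ≤ n → ℓ i 0 ≤ ℓ j 0)

include hbound hds hmono in
lemma Fval_generic (R : Finset ℕ) (i : ℕ) (h1 : 1 ≤ i) (h2 : i ≤ n + 1)
    (hReq : R = insert 0 (Icc 1 (i-1))
      ∨ (∃ j, 1 ≤ j ∧ j + 2 ≤ i ∧ R = insert 0 (Icc 1 (i-1) \ {j}))) :
    (matFor η ℓ R ({0} : Finset ℕ)).rank = ℓ (i-1) 0 := by
  apply rank_matFor_singlecol (m := i - 1)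
  · rcases hReq with rfl | ⟨j, hj1, hj2, rfl⟩
    · rcases Nat.eq_or_lt_of_le h1 with h | h
      · simp [← h]
      · exact Finset.mem_insert_of_mem (Finset.mem_Icc.2 (by omega))
    · refine Finset.mem_insert_of_mem (Finset.mem_sdiff.2 ⟨Finset.mem_Icc.2 (by omega), ?_⟩)
      simp only [Finset.mem_singleton]
      omega
  · intro x hx
    have hx' : x = 0 ∨ (1 ≤ x ∧ x ≤ i - 1) := by
      rcases hReq with rfl | ⟨j, hj1, hj2, rfl⟩ <;>
        · simp only [Finset.mem_insert, Finset.mem_sdiff, Finset.mem_Icc,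
            Finset.mem_singleton] at hx
          rcases hx with rfl | h
          · left; rfl
          · right; omega
    rcases hx' with rfl | ⟨hx1, hx2⟩
    · rw [hds]; exact Nat.zero_le _
    · rcases Nat.eq_or_lt_of_le hx2 with h | h
      · rw [h]
      · exact hmono x (i-1) hx1 (by omega) (by omega)
  · exact hbound (i-1) (by omega) 0 (by omega)

include hbound hds hmono in
lemma Fval_empty (i : ℕ) (h1 : 1 ≤ i) (h2 : i ≤ n + 1) :
    fRank n η ℓ (Icc i n) ∅ = ℓ (i-1) 0 := by
  rw [fRank_eq_matFor,
    rank_matFor_congr η ℓ (R' := insert 0 (Icc 1 (i-1))) (C' := ({0} : Finset ℕ))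
      (by ext x; simp only [rowIdx, Finset.mem_insert, Finset.mem_sdiff, Finset.mem_Icc,
            Finset.notMem_empty, Finset.mem_singleton, not_false_eq_true, and_true, Finset.mem_Icc]; omega)
      (by ext x; simp only [colIdx, Finset.mem_insert, Finset.mem_inter,
            Finset.notMem_empty, Finset.mem_singleton, not_false_eq_true, and_true]; tauto)]
  exact Fval_generic hbound hds hmono _ i h1 h2 (Or.inl rfl)

include hbound hds hmono in
lemma Fval_far (i j : ℕ) (hj1 : 1 ≤ j) (hij : j + 2 ≤ i) (hi : i ≤ n + 1) :
    fRank n η ℓ (Icc i n) {j} = ℓ (i-1) 0 := by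
  rw [fRank_eq_matFor,
    rank_matFor_congr η ℓ (R' := insert 0 (Icc 1 (i-1) \ {j})) (C' := ({0} : Finset ℕ))
      (by ext x; simp only [rowIdx, Finset.mem_insert, Finset.mem_sdiff, Finset.mem_Icc,
            Finset.mem_singleton]; omega)
      (by ext x; simp only [colIdx, Finset.mem_insert, Finset.mem_inter, Finset.mem_Icc,
            Finset.mem_singleton]; omega)]
  exact Fval_generic hbound hds hmono _ i (by omega) hi (Or.inr ⟨j, hj1, hij, rfl⟩)

include hbound hds hmono in
lemma Fval_near (j : ℕ) (hj1 : 1 ≤ j) (hjn : j ≤ n) :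
    fRank n η ℓ (Icc (j+1) n) {j} = ℓ (j-1) 0 := by
  rw [fRank_eq_matFor,
    rank_matFor_congr η ℓ (R' := insert 0 (Icc 1 (j-1))) (C' := ({0} : Finset ℕ))
      (by ext x; simp only [rowIdx, Finset.mem_insert, Finset.mem_sdiff, Finset.mem_Icc,
            Finset.mem_singleton]; omega)
      (by ext x; simp only [colIdx, Finset.mem_insert, Finset.mem_inter, Finset.mem_Icc,
            Finset.mem_singleton]; omega)]
  exact Fval_generic hbound hds hmono _ j hj1 (by omega) (Or.inl rfl)

lemma Fval_low_ge (i j : ℕ) (h1 : 1 ≤ i) (hij : i ≤ j) (hjn : j ≤ n) :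
    fRank n η ℓ (Icc i n) ∅ ≤ fRank n η ℓ (Icc i n) {j} := by
  rw [fRank_eq_matFor, fRank_eq_matFor,
    rank_matFor_congr η ℓ (R' := rowIdx n (Icc i n) {j}) (C' := colIdx (Icc i n) ∅)
      (by ext x; simp only [rowIdx, Finset.mem_insert, Finset.mem_sdiff, Finset.mem_Icc,
            Finset.notMem_empty, Finset.mem_singleton, not_false_eq_true, and_true, Finset.mem_Icc]; omega)
      rfl]
  apply rank_matFor_mono_col
  intro x hx
  simp only [colIdx, Finset.mem_insert, Finset.mem_inter, Finset.notMem_empty] at hx ⊢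
  tauto

end parts

noncomputable def lamRec (t : ℕ) (N : ℕ → ℕ → ℝ) (d : ℕ → ℝ) : ℕ → ℝ
  | i =>
    if _h : i < t then 0
    else if _h2 : i = t then 1
    else (∑ k ∈ (Finset.Icc t (i-1)).attach,
        lamRec t N d (k : ℕ) * N (k : ℕ) (i-1)) / d (i-1)
termination_by i => i
decreasing_by
  have hk := (Finset.mem_Icc.1 k.2).2
  omega

lemma lamRec_self (t : ℕ) (N : ℕ → ℕ → ℝ) (d : ℕ → ℝ) : lamRec t N d t = 1 := by
  rw [lamRec]; simp

lemma lamRec_lt (t : ℕ) (N : ℕ → ℕ → ℝ) (d : ℕ → ℝ) (i : ℕ) (h : i < t) :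
    lamRec t N d i = 0 := by
  rw [lamRec]; simp [h]

lemma lamRec_gt (t : ℕ) (N : ℕ → ℕ → ℝ) (d : ℕ → ℝ) (i : ℕ) (h : t < i) :
    lamRec t N d i = (∑ k ∈ Finset.Icc t (i-1), lamRec t N d k * N k (i-1)) / d (i-1) := by
  rw [lamRec]
  rw [dif_neg (by omega), dif_neg (by omega),
    Finset.sum_attach (Finset.Icc t (i-1)) (fun k => lamRec t N d k * N k (i-1))]

theorem stmt12 (n η : ℕ) (hn : 1 ≤ n) (hη : 1 ≤ η) (ℓ : ℕ → ℕ → ℕ)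
    (hbound : ∀ i ≤ n, ∀ j ≤ n, ℓ i j ≤ η)
    (hds : ℓ 0 0 = 0) (hii : ∀ i, 1 ≤ i → i ≤ n → ℓ i i = 0)
    (hmono : ∀ i j, 1 ≤ i → i ≤ j → j ≤ n → ℓ i 0 ≤ ℓ j 0)
    (hdet : (Pmat n η ℓ).det ≠ 0)
    (μ : Fin (n + 2) → ℝ)
    (hμ : Matrix.vecMul μ (Pmat n η ℓ) = fun k => if k = 0 then 1 else 0) :
    ∀ S ⊆ Finset.Icc 1 n,
      ∑ i ∈ Finset.Icc 1 (n + 1),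
          μ (i : Fin (n + 2)) * (fRank n η ℓ (Finset.Icc i n) S : ℝ)
        ≤ μ 0 := by
  classical
  have hval : ∀ i : ℕ, i ≤ n + 1 → ((i : Fin (n+2)) : ℕ) = i := by
    intro i hi
    rw [Fin.val_natCast]
    exact Nat.mod_eq_of_lt (by omega)
  -- decomposition of sums over Fin (n+2)
  have hdecomp : ∀ G : Fin (n+2) → ℝ,
      (∑ x : Fin (n+2), G x) = G 0 + ∑ i ∈ Finset.Icc 1 (n+1), G (i : Fin (n+2)) := by
    intro G
    have h0 : (∑ x : Fin (n+2), G x) = ∑ i ∈ Finset.range (n+2), G (i : Fin (n+2)) := by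
      rw [← Fin.sum_univ_eq_sum_range (fun i => G (i : Fin (n+2))) (n+2)]
      apply Finset.sum_congr rfl
      intro x _
      rw [Fin.cast_val_eq_self]
    rw [h0, show Finset.range (n+2) = insert 0 (Finset.Icc 1 (n+1)) by
        ext x; simp only [Finset.mem_range, Finset.mem_insert, Finset.mem_Icc]; omega,
      Finset.sum_insert (by simp)]
    norm_num
  -- entry evaluation
  have hP0 : ∀ k : Fin (n+2), Pmat n η ℓ 0 k = if (k : ℕ) = 0 then 0 else 1 := by
    intro k; simp [Pmat]
  have hPi : ∀ i : ℕ, 1 ≤ i → i ≤ n+1 → ∀ k : Fin (n+2),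
      Pmat n η ℓ (i : Fin (n+2)) k
        = if (k : ℕ) = 0 then 1 else
          -(fRank n η ℓ (Finset.Icc i n) (if (k:ℕ) = n + 1 then ∅ else {(k:ℕ)}) : ℝ) := by
    intro i h1 h2 k
    have hiv := hval i (by omega)
    simp only [Pmat, Matrix.of_apply, hiv]
    rw [if_neg (by omega)]
  -- the vecMul unfolding
  have hvm : ∀ (v : Fin (n+2) → ℝ) (k : Fin (n+2)),
      Matrix.vecMul v (Pmat n η ℓ) k = ∑ x : Fin (n+2), v x * Pmat n η ℓ x k := by
    intro v k
    simp [Matrix.vecMul, dotProduct]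
  -- column equalities satisfied by μ
  have hcol : ∀ j : ℕ, 1 ≤ j → j ≤ n + 1 →
      ∑ i ∈ Finset.Icc 1 (n+1), μ (i : Fin (n+2))
          * (fRank n η ℓ (Finset.Icc i n) (if j = n+1 then ∅ else {j}) : ℝ) = μ 0 := by
    intro j hj1 hj2
    have hk := congrFun hμ (j : Fin (n+2))
    have hkv : ((j : Fin (n+2)) : ℕ) = j := hval j hj2
    have hkne : (j : Fin (n+2)) ≠ 0 := by
      intro h
      have := congrArg Fin.val h
      rw [hkv] at this
      simp at this
      omega
    rw [hvm, hdecomp (fun x => μ x * Pmat n η ℓ x (j : Fin (n+2))), if_neg hkne] at hk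
    have hA : μ 0 * Pmat n η ℓ 0 (j : Fin (n+2)) = μ 0 := by
      rw [hP0, hkv, if_neg (by omega), mul_one]
    have hB : ∀ i ∈ Finset.Icc 1 (n+1), μ (i : Fin (n+2)) * Pmat n η ℓ (i : Fin (n+2)) (j : Fin (n+2))
        = -(μ (i : Fin (n+2)) * (fRank n η ℓ (Finset.Icc i n) (if j = n+1 then ∅ else {j}) : ℝ)) := by
      intro i hi
      rw [hPi i (Finset.mem_Icc.1 hi).1 (Finset.mem_Icc.1 hi).2, hkv,
        if_neg (by omega), mul_neg]
    rw [hA, Finset.sum_congr rfl hB, Finset.sum_neg_distrib] at hk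
    linarith [hk]
  -- monotonicity of source links
  have hamono : ∀ j, 1 ≤ j → j ≤ n → ℓ (j-1) 0 ≤ ℓ j 0 := by
    intro j hj1 hjn
    rcases Nat.eq_or_lt_of_le hj1 with h | h
    · rw [← h]
      simp only [Nat.sub_self]
      rw [hds]
      exact Nat.zero_le _
    · exact hmono (j-1) j (by omega) (by omega) hjn
  ----------------------------------------------------------------
  -- PART A : construct the nonnegative solution
  ----------------------------------------------------------------
  set J : Finset ℕ := (Finset.Icc 1 n).filter (fun j => ℓ j 0 = ℓ (j-1) 0) with hJ
  set t : ℕ := if h : J.Nonempty then J.max' h + 1 else 1 with ht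
  have hmaxJ : ∀ h : J.Nonempty, J.max' h ∈ J := fun h => J.max'_mem h
  have htlb : 1 ≤ t := by
    rw [ht]
    split_ifs with h
    · omega
    · omega
  have htub : t ≤ n + 1 := by
    rw [ht]
    split_ifs with h
    · have hmem := (Finset.mem_filter.1 (hmaxJ h)).1
      rw [Finset.mem_Icc] at hmem
      omega
    · omega
  have ht2 : ∀ j, t ≤ j → j ≤ n → ℓ (j-1) 0 < ℓ j 0 := by
    intro j hjt hjn
    have hj1 : 1 ≤ j := le_trans htlb hjt
    have hne : ℓ j 0 ≠ ℓ (j-1) 0 := by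
      intro heq
      have hjJ : j ∈ J :=
        Finset.mem_filter.2 ⟨Finset.mem_Icc.2 ⟨hj1, hjn⟩, heq⟩
      have hJne : J.Nonempty := ⟨j, hjJ⟩
      have hle := Finset.le_max' J j hjJ
      rw [ht] at hjt
      rw [dif_pos hJne] at hjt
      omega
    have := hamono j hj1 hjn
    omega
  have ht3 : 2 ≤ t → ℓ (t-1) 0 = ℓ (t-2) 0 := by
    intro h2t
    have hJne : J.Nonempty := by
      by_contra hc
      rw [ht, dif_neg hc] at h2t
      omega
    have hmax := Finset.mem_filter.1 (hmaxJ hJne)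
    have htmax : t = J.max' hJne + 1 := by rw [ht, dif_pos hJne]
    have h1 : t - 1 = J.max' hJne := by omega
    have h2 : t - 2 = J.max' hJne - 1 := by omega
    rw [h1, h2]
    exact hmax.2
  -- the recursive weights
  set Nf : ℕ → ℕ → ℝ := fun i j =>
    (fRank n η ℓ (Finset.Icc i n) {j} : ℝ) - (ℓ (i-1) 0 : ℝ) with hNf
  set df : ℕ → ℝ := fun j => (ℓ j 0 : ℝ) - (ℓ (j-1) 0 : ℝ) with hdf
  set lam : ℕ → ℝ := lamRec t Nf df with hlam
  have hlam_lt : ∀ i, i < t → lam i = 0 := fun i h => lamRec_lt t Nf df i h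
  have hlam_t : lam t = 1 := lamRec_self t Nf df
  have hlam_gt : ∀ i, t < i →
      lam i = (∑ k ∈ Finset.Icc t (i-1), lam k * Nf k (i-1)) / df (i-1) :=
    fun i h => lamRec_gt t Nf df i h
  have hd_pos : ∀ j, t ≤ j → j ≤ n → 0 < df j := by
    intro j h1 h2
    rw [hdf]
    simp only
    have := ht2 j h1 h2
    have : (ℓ (j-1) 0 : ℝ) < (ℓ j 0 : ℝ) := by exact_mod_cast this
    linarith
  have hN_nonneg : ∀ k j, 1 ≤ k → k ≤ j → j ≤ n → 0 ≤ Nf k j := by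
    intro k j hk hkj hjn
    have hlow := Fval_low_ge (n := n) (η := η) (ℓ := ℓ) k j hk hkj hjn
    have he := Fval_empty hbound hds hmono k (by omega) (by omega)
    rw [hNf]
    simp only
    rw [sub_nonneg, ← he]
    exact_mod_cast hlow
  have hlam_nonneg : ∀ i, i ≤ n + 1 → 0 ≤ lam i := by
    intro i
    induction i using Nat.strong_induction_on with
    | _ i ih =>
      intro hi
      rcases lt_trichotomy i t with h | h | h
      · rw [hlam_lt i h]
      · rw [h, hlam_t]; norm_num
      · rw [hlam_gt i h]
        apply div_nonneg
        · apply Finset.sum_nonneg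
          intro k hk
          rw [Finset.mem_Icc] at hk
          have hk0 : 0 ≤ lam k := ih k (by omega) (by omega)
          have hN0 : 0 ≤ Nf k (i-1) := hN_nonneg k (i-1) (by omega) (by omega) (by omega)
          exact mul_nonneg hk0 hN0
        · exact (hd_pos (i-1) (by omega) (by omega)).le
  have hbalance : ∀ j, 1 ≤ j → j ≤ n →
      ∑ k ∈ Finset.Icc 1 j, lam k * Nf k j = lam (j+1) * df j := by
    intro j hj1 hjn
    by_cases hcase : t ≤ j
    · rw [hlam_gt (j+1) (by omega)]
      simp only [Nat.add_sub_cancel]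
      rw [div_mul_cancel₀ _ (hd_pos j hcase hjn).ne']
      refine (Finset.sum_subset (fun x hx => ?_) (fun x hx hxn => ?_)).symm
      · rw [Finset.mem_Icc] at hx ⊢
        omega
      · rw [Finset.mem_Icc] at hx
        rw [Finset.mem_Icc] at hxn
        have hxt : x < t := by omega
        rw [hlam_lt x hxt, zero_mul]
    · push_neg at hcase
      have hLHS : ∑ k ∈ Finset.Icc 1 j, lam k * Nf k j = 0 := by
        apply Finset.sum_eq_zero
        intro k hk
        rw [Finset.mem_Icc] at hk
        rw [hlam_lt k (by omega), zero_mul]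
      rcases Nat.lt_or_ge (j+1) t with h | h
      · rw [hLHS, hlam_lt _ h, zero_mul]
      · have hjt : j + 1 = t := by omega
        have hd0 : df j = 0 := by
          have h3 := ht3 (by omega)
          rw [hdf]
          simp only
          have e1 : t - 1 = j := by omega
          have e2 : t - 2 = j - 1 := by omega
          rw [e1, e2] at h3
          rw [h3]
          ring
        rw [hLHS, hd0, mul_zero]
  -- total mass
  set tot : ℝ := ∑ i ∈ Finset.Icc 1 (n+1), lam i with htot
  have htot_pos : 0 < tot := by
    have h1 : (1 : ℝ) ≤ tot := by
      rw [← hlam_t, htot]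
      apply Finset.single_le_sum (f := lam)
      · intro i hi
        rw [Finset.mem_Icc] at hi
        exact hlam_nonneg i hi.2
      · rw [Finset.mem_Icc]; omega
    linarith
  -- the candidate dual solution
  set mu' : Fin (n+2) → ℝ := fun k =>
    if (k : ℕ) = 0 then (∑ i ∈ Finset.Icc 1 (n+1), lam i * (ℓ (i-1) 0 : ℝ)) / tot
    else lam (k : ℕ) / tot with hmu'
  -- key column computation
  have hcolsum : ∀ j, 1 ≤ j → j ≤ n →
      ∑ i ∈ Finset.Icc 1 (n+1),
        lam i * ((fRank n η ℓ (Finset.Icc i n) {j} : ℝ) - (ℓ (i-1) 0 : ℝ)) = 0 := by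
    intro j hj1 hjn
    have hsplit : Finset.Icc 1 (n+1) = Finset.Icc 1 j ∪ Finset.Icc (j+1) (n+1) := by
      ext x; simp only [Finset.mem_Icc, Finset.mem_union]; omega
    have hdisj : Disjoint (Finset.Icc 1 j) (Finset.Icc (j+1) (n+1)) := by
      rw [Finset.disjoint_left]
      intro x hx hx'
      rw [Finset.mem_Icc] at hx hx'
      omega
    rw [hsplit, Finset.sum_union hdisj]
    have hins : Finset.Icc (j+1) (n+1) = insert (j+1) (Finset.Icc (j+2) (n+1)) := by
      ext x; simp only [Finset.mem_Icc, Finset.mem_insert]; omega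
    rw [hins, Finset.sum_insert (by rw [Finset.mem_Icc]; omega)]
    have hzero : ∑ i ∈ Finset.Icc (j+2) (n+1),
        lam i * ((fRank n η ℓ (Finset.Icc i n) {j} : ℝ) - (ℓ (i-1) 0 : ℝ)) = 0 := by
      apply Finset.sum_eq_zero
      intro i hi
      rw [Finset.mem_Icc] at hi
      rw [Fval_far hbound hds hmono i j hj1 (by omega) (by omega)]
      simp
    have hnear : (fRank n η ℓ (Finset.Icc (j+1) n) {j} : ℝ) = (ℓ (j-1) 0 : ℝ) := by
      rw [Fval_near hbound hds hmono j hj1 hjn]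
    have hmain : ∑ i ∈ Finset.Icc 1 j,
        lam i * ((fRank n η ℓ (Finset.Icc i n) {j} : ℝ) - (ℓ (i-1) 0 : ℝ))
        = lam (j+1) * df j := by
      rw [← hbalance j hj1 hjn]
    rw [hmain, hzero, hnear]
    have : (ℓ (j+1-1) 0 : ℝ) = (ℓ j 0 : ℝ) := by norm_num
    rw [this, hdf]
    simp only
    ring
  -- mu' satisfies the linear system
  have hvec : Matrix.vecMul mu' (Pmat n η ℓ) = (fun k => if k = 0 then 1 else 0) := by
    funext k
    rw [hvm, hdecomp (fun x => mu' x * Pmat n η ℓ x k)]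
    by_cases hk0 : (k : ℕ) = 0
    · have hk : k = 0 := Fin.ext (by simp [hk0])
      subst hk
      have h1 : mu' 0 * Pmat n η ℓ 0 0 = 0 := by
        rw [hP0]
        simp
      have h2 : ∀ i ∈ Finset.Icc 1 (n+1),
          mu' (i : Fin (n+2)) * Pmat n η ℓ (i : Fin (n+2)) 0 = lam i / tot := by
        intro i hi
        rw [Finset.mem_Icc] at hi
        have hiv := hval i (by omega)
        rw [hPi i hi.1 hi.2 0,
          show ((0 : Fin (n+2)) : ℕ) = 0 from rfl, if_pos rfl, mul_one]
        simp only [hmu', hiv]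
        rw [if_neg (by omega)]
      rw [h1, Finset.sum_congr rfl h2, zero_add, ← Finset.sum_div, ← htot,
        div_self htot_pos.ne']
      simp
    · have hkN : 1 ≤ (k : ℕ) ∧ (k : ℕ) ≤ n + 1 := ⟨by omega, by omega⟩
      have hkne : k ≠ 0 := fun h => hk0 (by rw [h]; simp)
      have h1 : mu' 0 * Pmat n η ℓ 0 k
          = (∑ i ∈ Finset.Icc 1 (n+1), lam i * (ℓ (i-1) 0 : ℝ)) / tot := by
        rw [hP0, if_neg hk0, mul_one, hmu']
        simp
      have h2 : ∀ i ∈ Finset.Icc 1 (n+1),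
          mu' (i : Fin (n+2)) * Pmat n η ℓ (i : Fin (n+2)) k
          = -(lam i * (fRank n η ℓ (Finset.Icc i n)
              (if (k:ℕ) = n + 1 then ∅ else {(k:ℕ)}) : ℝ)) / tot := by
        intro i hi
        rw [Finset.mem_Icc] at hi
        rw [hPi i hi.1 hi.2 k, if_neg hk0, hmu']
        simp only [hval i (by omega)]
        rw [if_neg (by omega)]
        field_simp
      rw [h1, Finset.sum_congr rfl h2, if_neg hkne]
      have hFsum : ∑ i ∈ Finset.Icc 1 (n+1),
          lam i * (fRank n η ℓ (Finset.Icc i n)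
            (if (k:ℕ) = n + 1 then ∅ else {(k:ℕ)}) : ℝ)
          = ∑ i ∈ Finset.Icc 1 (n+1), lam i * (ℓ (i-1) 0 : ℝ) := by
        by_cases hkn : (k : ℕ) = n + 1
        · rw [if_pos hkn]
          apply Finset.sum_congr rfl
          intro i hi
          rw [Finset.mem_Icc] at hi
          rw [Fval_empty hbound hds hmono i hi.1 hi.2]
        · rw [if_neg hkn]
          have hc := hcolsum (k : ℕ) hkN.1 (by omega)
          have : ∑ i ∈ Finset.Icc 1 (n+1), lam i * ((fRank n η ℓ (Finset.Icc i n) {(k:ℕ)} : ℝ) - (ℓ (i-1) 0 : ℝ))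
              = ∑ i ∈ Finset.Icc 1 (n+1), (lam i * (fRank n η ℓ (Finset.Icc i n) {(k:ℕ)} : ℝ) - lam i * (ℓ (i-1) 0 : ℝ)) := by
            apply Finset.sum_congr rfl
            intro i _
            ring
          rw [this, Finset.sum_sub_distrib] at hc
          linarith [hc]
      rw [show ∑ i ∈ Finset.Icc 1 (n+1),
            -(lam i * (fRank n η ℓ (Finset.Icc i n)
              (if (k:ℕ) = n + 1 then ∅ else {(k:ℕ)}) : ℝ)) / tot
          = -(∑ i ∈ Finset.Icc 1 (n+1),
            lam i * (fRank n η ℓ (Finset.Icc i n)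
              (if (k:ℕ) = n + 1 then ∅ else {(k:ℕ)}) : ℝ)) / tot by
        rw [← Finset.sum_div, ← Finset.sum_neg_distrib]]
      rw [hFsum]
      field_simp
      ring
  -- uniqueness: μ = mu'
  have hmueq : μ = mu' := by
    have hsub : Matrix.vecMul (μ - mu') (Pmat n η ℓ) = 0 := by
      rw [Matrix.sub_vecMul, hμ, hvec]
      simp
    have hP : IsUnit (Pmat n η ℓ).det := isUnit_iff_ne_zero.2 hdet
    have h2 := congrArg (fun v => Matrix.vecMul v (Pmat n η ℓ)⁻¹) hsub
    simp only [Matrix.vecMul_vecMul, Matrix.mul_nonsing_inv _ hP, Matrix.vecMul_one,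
      Matrix.zero_vecMul] at h2
    rwa [sub_eq_zero] at h2
  have hmu_nonneg : ∀ i, 1 ≤ i → i ≤ n + 1 → 0 ≤ μ (i : Fin (n+2)) := by
    intro i h1 h2
    rw [hmueq, hmu']
    simp only [hval i (by omega)]
    rw [if_neg (by omega)]
    exact div_nonneg (hlam_nonneg i h2) htot_pos.le
  ----------------------------------------------------------------
  -- PART B : induction over states
  ----------------------------------------------------------------
  have main : ∀ m : ℕ, ∀ S ⊆ Finset.Icc 1 n, S.card ≤ m →
      ∑ i ∈ Finset.Icc 1 (n+1),
        μ (i : Fin (n+2)) * (fRank n η ℓ (Finset.Icc i n) S : ℝ) ≤ μ 0 := by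
    intro m
    induction m with
    | zero =>
      intro S hS hc
      have hSe : S = ∅ := Finset.card_eq_zero.1 (by omega)
      subst hSe
      have := hcol (n+1) (by omega) le_rfl
      rw [if_pos rfl] at this
      exact le_of_eq this
    | succ m ih =>
      intro S hS hc
      rcases Finset.eq_empty_or_nonempty S with rfl | ⟨j, hj⟩
      · have := hcol (n+1) (by omega) le_rfl
        rw [if_pos rfl] at this
        exact le_of_eq this
      · have hjIcc := hS hj
        rw [Finset.mem_Icc] at hjIcc
        have hcj : ∑ i ∈ Finset.Icc 1 (n+1),
            μ (i : Fin (n+2)) * (fRank n η ℓ (Finset.Icc i n) {j} : ℝ) = μ 0 := by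
          have := hcol j hjIcc.1 (by omega)
          rwa [if_neg (by omega)] at this
        have hce : ∑ i ∈ Finset.Icc 1 (n+1),
            μ (i : Fin (n+2)) * (fRank n η ℓ (Finset.Icc i n) ∅ : ℝ) = μ 0 := by
          have := hcol (n+1) (by omega) le_rfl
          rwa [if_pos rfl] at this
        by_cases hS1 : S.erase j = ∅
        · have hSj : S = {j} := by
            apply Finset.eq_singleton_iff_unique_mem.2
            refine ⟨hj, fun x hx => ?_⟩
            by_contra hne
            exact (Finset.notMem_empty x) (hS1 ▸ Finset.mem_erase.2 ⟨hne, hx⟩)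
          rw [hSj]
          exact le_of_eq hcj
        · -- submodular step
          have hsubm : ∀ i ∈ Finset.Icc 1 (n+1),
              (fRank n η ℓ (Finset.Icc i n) S : ℝ)
                + (fRank n η ℓ (Finset.Icc i n) ∅ : ℝ)
              ≤ (fRank n η ℓ (Finset.Icc i n) (S.erase j) : ℝ)
                + (fRank n η ℓ (Finset.Icc i n) {j} : ℝ) := by
            intro i _
            have hsm := fRank_submod n η ℓ (Finset.Icc i n) (S.erase j) {j}
            have hu : S.erase j ∪ {j} = S := by
              rw [Finset.union_comm, ← Finset.insert_eq, Finset.insert_erase hj]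
            have hint : S.erase j ∩ {j} = ∅ := by
              ext x
              simp only [Finset.mem_inter, Finset.mem_erase, Finset.mem_singleton,
                Finset.notMem_empty, iff_false]
              rintro ⟨⟨hne, -⟩, rfl⟩
              exact hne rfl
            rw [hu, hint] at hsm
            exact_mod_cast hsm
          have hsum : (∑ i ∈ Finset.Icc 1 (n+1),
                μ (i : Fin (n+2)) * (fRank n η ℓ (Finset.Icc i n) S : ℝ))
              + (∑ i ∈ Finset.Icc 1 (n+1),
                μ (i : Fin (n+2)) * (fRank n η ℓ (Finset.Icc i n) ∅ : ℝ))
              ≤ (∑ i ∈ Finset.Icc 1 (n+1),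
                μ (i : Fin (n+2)) * (fRank n η ℓ (Finset.Icc i n) (S.erase j) : ℝ))
              + (∑ i ∈ Finset.Icc 1 (n+1),
                μ (i : Fin (n+2)) * (fRank n η ℓ (Finset.Icc i n) {j} : ℝ)) := by
            rw [← Finset.sum_add_distrib, ← Finset.sum_add_distrib]
            apply Finset.sum_le_sum
            intro i hi
            rw [Finset.mem_Icc] at hi
            rw [← mul_add, ← mul_add]
            exact mul_le_mul_of_nonneg_left (hsubm i (Finset.mem_Icc.2 hi))
              (hmu_nonneg i hi.1 hi.2)
          have hih : ∑ i ∈ Finset.Icc 1 (n+1),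
              μ (i : Fin (n+2)) * (fRank n η ℓ (Finset.Icc i n) (S.erase j) : ℝ) ≤ μ 0 := by
            apply ih (S.erase j) (fun x hx => hS (Finset.mem_of_mem_erase hx))
            have := Finset.card_erase_of_mem hj
            have hpos : 1 ≤ S.card := Finset.card_pos.2 ⟨j, hj⟩
            omega
          linarith
  intro S hS
  exact main S.card S hS le_rfl
end

section
/- Let ℓ := max({i ∈ [n] : ℓ_{i,s} = ℓ_{i−1,s}} ∪ {0}). If det P ≠ 0, then μ_j = 0 for every j ∈ {1,…,ℓ}. -/
open Finset
open Fin.NatCast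

noncomputable def Fr (η : ℕ) (ℓ : ℕ → ℕ → ℕ) (A B : Finset ℕ) : ℕ :=
  Matrix.rank
    (Matrix.of fun (p : ↥A × Fin η) (q : ↥B × Fin η) =>
      Dblk η (ℓ (p.1 : ℕ) (q.1 : ℕ)) p.2 q.2)

lemma rank_aux (η : ℕ) (ℓ : ℕ → ℕ → ℕ) (T₁ T₂ C : Finset ℕ)
    (hC : ∀ x ∈ C, x = 0) (hsub : T₁ ⊆ T₂)
    (hcov : ∀ r ∈ T₂, ∃ r' ∈ T₁, ℓ r 0 ≤ ℓ r' 0 ∧ ℓ r' 0 ≤ η) :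
    Fr η ℓ T₁ C = Fr η ℓ T₂ C := by
  have hM : ∀ (T : Finset ℕ),
      (Matrix.of fun (p : ↥T × Fin η) (q : ↥C × Fin η) =>
        Dblk η (ℓ (p.1 : ℕ) (q.1 : ℕ)) p.2 q.2)
      = (Matrix.of fun (p : ↥T × Fin η) (q : ↥C × Fin η) =>
        Dblk η (ℓ (p.1 : ℕ) 0) p.2 q.2) := by
    intro T
    ext p q
    simp only [Matrix.of_apply]
    rw [hC (q.1 : ℕ) q.1.2]
  set m : ℕ → ℕ := fun r => ℓ r 0 with hm
  have key : ∀ (T : Finset ℕ),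
      (Matrix.of fun (p : ↥T × Fin η) (q : ↥C × Fin η) =>
        Dblk η (m (p.1 : ℕ)) p.2 q.2).rank
      = Module.finrank (ZMod 2) (Submodule.span (ZMod 2)
          (Set.range (Matrix.of fun (p : ↥T × Fin η) (q : ↥C × Fin η) =>
            Dblk η (m (p.1 : ℕ)) p.2 q.2))) := by
    intro T
    rw [← Matrix.rank_transpose, Matrix.rank_eq_finrank_span_cols,
      Matrix.col, Matrix.transpose_transpose]
  have hspan : Submodule.span (ZMod 2)
        (Set.range (Matrix.of fun (p : ↥T₁ × Fin η) (q : ↥C × Fin η) =>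
          Dblk η (m (p.1 : ℕ)) p.2 q.2))
      = Submodule.span (ZMod 2)
        (Set.range (Matrix.of fun (p : ↥T₂ × Fin η) (q : ↥C × Fin η) =>
          Dblk η (m (p.1 : ℕ)) p.2 q.2)) := by
    apply le_antisymm
    · apply Submodule.span_mono
      rintro _ ⟨⟨r, i0⟩, rfl⟩
      exact ⟨(⟨(r : ℕ), hsub r.2⟩, i0), rfl⟩
    · rw [Submodule.span_le]
      rintro _ ⟨⟨r, i0⟩, rfl⟩
      obtain ⟨r', hr'T, hle, hη'⟩ := hcov (r : ℕ) r.2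
      by_cases hex : ∃ jj : Fin η, (jj : ℕ) < m (r : ℕ) ∧ (i0 : ℕ) = (jj : ℕ) + (η - m (r : ℕ))
      · obtain ⟨jj, hjj, hi0⟩ := hex
        have hjj' : (jj : ℕ) < m r' := lt_of_lt_of_le hjj hle
        have hfin : (jj : ℕ) + (η - m r') < η := by omega
        apply Submodule.subset_span
        refine ⟨(⟨r', hr'T⟩, ⟨(jj : ℕ) + (η - m r'), hfin⟩), ?_⟩
        funext q
        show Dblk η (m r') _ q.2 = Dblk η (m (r : ℕ)) i0 q.2
        unfold Dblk
        simp only [Matrix.of_apply]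
        by_cases h : (q.2 : ℕ) = (jj : ℕ)
        · rw [if_pos, if_pos]
          · exact ⟨by omega, by omega⟩
          · exact ⟨by omega, by omega⟩
        · rw [if_neg, if_neg]
          · rintro ⟨h1, h2⟩; omega
          · rintro ⟨h1, h2⟩; omega
      · push_neg at hex
        have hz : (Matrix.of fun (p : ↥T₂ × Fin η) (q : ↥C × Fin η) =>
            Dblk η (m (p.1 : ℕ)) p.2 q.2) (r, i0) = 0 := by
          funext q
          show Dblk η (m (r : ℕ)) i0 q.2 = 0
          unfold Dblk
          simp only [Matrix.of_apply]
          rw [if_neg]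
          rintro ⟨h1, h2⟩
          exact absurd h2 (hex q.2 h1)
        rw [hz]
        exact Submodule.zero_mem _
  unfold Fr
  rw [hM, hM, key, key, hspan]

lemma fRank_eq (n η : ℕ) (ℓ : ℕ → ℕ → ℕ)
    (hbound : ∀ i ≤ n, ∀ j ≤ n, ℓ i j ≤ η)
    (hds : ℓ 0 0 = 0)
    (hmono : ∀ i j, 1 ≤ i → i ≤ j → j ≤ n → ℓ i 0 ≤ ℓ j 0)
    (L j i : ℕ) (hL1 : 1 ≤ L) (hLn : L ≤ n) (hLf : ℓ L 0 = ℓ (L - 1) 0)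
    (hj1 : 1 ≤ j) (hjL : j ≤ L) (hi : L + 1 ≤ i) (hin : i ≤ n + 1) :
    fRank n η ℓ (Finset.Icc i n) {j} = fRank n η ℓ (Finset.Icc i n) ∅ := by
  have hji : j < i := by omega
  have hcol : colIdx (Finset.Icc i n) {j} = colIdx (Finset.Icc i n) (∅ : Finset ℕ) := by
    unfold colIdx
    congr 1
    rw [Finset.inter_empty]
    apply Finset.eq_empty_of_forall_notMem
    intro x hx
    simp only [Finset.mem_inter, Finset.mem_Icc, Finset.mem_singleton] at hx
    omega
  have e1 : fRank n η ℓ (Finset.Icc i n) {j}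
      = Fr η ℓ (rowIdx n (Finset.Icc i n) {j}) (colIdx (Finset.Icc i n) {j}) := rfl
  have e2 : fRank n η ℓ (Finset.Icc i n) (∅ : Finset ℕ)
      = Fr η ℓ (rowIdx n (Finset.Icc i n) ∅) (colIdx (Finset.Icc i n) ∅) := rfl
  rw [e1, e2, hcol]
  apply rank_aux
  · intro x hx
    simp only [colIdx, Finset.inter_empty, Finset.mem_insert, Finset.notMem_empty,
      or_false] at hx
    exact hx
  · unfold rowIdx
    apply Finset.insert_subset_insert
    intro x hx
    simp only [Finset.mem_sdiff, Finset.mem_singleton, Finset.notMem_empty] at hx ⊢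
    exact ⟨hx.1, not_false⟩
  · intro r hr
    simp only [rowIdx, Finset.mem_insert, Finset.mem_sdiff, Finset.mem_Icc,
      Finset.notMem_empty, not_false_iff, and_true] at hr
    rcases hr with hr0 | ⟨⟨hr1, hrn⟩, hri⟩
    · refine ⟨0, Finset.mem_insert_self _ _, ?_, ?_⟩
      · subst hr0; exact le_refl _
      · rw [hds]; omega
    · have hri' : r < i := by
        by_contra hcontra
        exact hri ⟨by omega, hrn⟩
      by_cases hrj : r = j
      · subst hrj
        by_cases hcase : r + 1 < i
        · -- use i - 1
          refine ⟨i - 1, ?_, ?_, ?_⟩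
          · apply Finset.mem_insert_of_mem
            simp only [Finset.mem_sdiff, Finset.mem_Icc, Finset.mem_singleton]
            refine ⟨⟨⟨by omega, by omega⟩, ?_⟩, by omega⟩
            rintro ⟨h1, h2⟩; omega
          · exact hmono r (i - 1) hr1 (by omega) (by omega)
          · exact hbound (i - 1) (by omega) 0 (by omega)
        · -- i = r + 1, so r = L (since r = j ≤ L and L + 1 ≤ i = r + 1)
          have hrL : r = L := by omega
          subst hrL
          rcases Nat.lt_or_ge r 2 with h2 | h2
          · -- L = 1 : use 0
            refine ⟨0, Finset.mem_insert_self _ _, ?_, ?_⟩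
            · have : r = 1 := by omega
              rw [this] at hLf ⊢
              simp only [Nat.sub_self] at hLf
              rw [hLf, hds]
            · rw [hds]; omega
          · -- L ≥ 2 : use L - 1
            refine ⟨r - 1, ?_, ?_, ?_⟩
            · apply Finset.mem_insert_of_mem
              simp only [Finset.mem_sdiff, Finset.mem_Icc, Finset.mem_singleton]
              refine ⟨⟨⟨by omega, by omega⟩, ?_⟩, by omega⟩
              rintro ⟨h1, h2⟩; omega
            · rw [hLf]
            · exact hbound (r - 1) (by omega) 0 (by omega)
      · refine ⟨r, ?_, le_refl _, hbound r (by omega) 0 (by omega)⟩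
        apply Finset.mem_insert_of_mem
        simp only [Finset.mem_sdiff, Finset.mem_Icc, Finset.mem_singleton]
        exact ⟨⟨⟨hr1, hrn⟩, hri⟩, hrj⟩

lemma Pzero (n η : ℕ) (ℓ : ℕ → ℕ → ℕ)
    (hbound : ∀ i ≤ n, ∀ j ≤ n, ℓ i j ≤ η)
    (hds : ℓ 0 0 = 0)
    (hmono : ∀ i j, 1 ≤ i → i ≤ j → j ≤ n → ℓ i 0 ≤ ℓ j 0)
    (L j : ℕ) (hL1 : 1 ≤ L) (hLn : L ≤ n) (hLf : ℓ L 0 = ℓ (L - 1) 0)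
    (hj1 : 1 ≤ j) (hjL : j ≤ L)
    (i : Fin (n + 2)) (hi : (i : ℕ) = 0 ∨ L + 1 ≤ (i : ℕ)) :
    Pmat n η ℓ i ((j : ℕ) : Fin (n + 2)) = Pmat n η ℓ i (Fin.last (n + 1)) := by
  have hjv : (((j : ℕ) : Fin (n + 2)) : ℕ) = j := Fin.val_cast_of_lt (by omega)
  have hlv : ((Fin.last (n + 1) : Fin (n + 2)) : ℕ) = n + 1 := rfl
  unfold Pmat
  simp only [Matrix.of_apply, hjv, hlv]
  rcases hi with h0 | hL'
  · rw [if_pos h0, if_pos h0, if_neg (by omega), if_neg (by omega)]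
  · rw [if_neg (show ¬(i : ℕ) = 0 by omega), if_neg (show ¬(i : ℕ) = 0 by omega),
      if_neg (show ¬j = 0 by omega), if_neg (show ¬(n + 1) = 0 by omega),
      if_neg (show ¬j = n + 1 by omega), if_pos trivial]
    rw [fRank_eq n η ℓ hbound hds hmono L j (i : ℕ) hL1 hLn hLf hj1 hjL hL' (by omega)]


theorem stmt15 (n η : ℕ) (hn : 1 ≤ n) (hη : 1 ≤ η) (ℓ : ℕ → ℕ → ℕ)
    (hbound : ∀ i ≤ n, ∀ j ≤ n, ℓ i j ≤ η)
    (hds : ℓ 0 0 = 0) (hii : ∀ i, 1 ≤ i → i ≤ n → ℓ i i = 0)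
    (hmono : ∀ i j, 1 ≤ i → i ≤ j → j ≤ n → ℓ i 0 ≤ ℓ j 0)
    (hdet : (Pmat n η ℓ).det ≠ 0)
    (μ : Fin (n + 2) → ℝ)
    (hμ : Matrix.vecMul μ (Pmat n η ℓ) = fun k => if k = 0 then 1 else 0) :
    ∀ j : ℕ, 1 ≤ j →
      j ≤ ((Finset.Icc 1 n).filter (fun i => ℓ i 0 = ℓ (i - 1) 0)).sup id →
      μ (j : Fin (n + 2)) = 0 := by
  intro j hj1 hjL
  set L := ((Finset.Icc 1 n).filter (fun i => ℓ i 0 = ℓ (i - 1) 0)).sup id with hLdef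
  have hLne : ((Finset.Icc 1 n).filter (fun i => ℓ i 0 = ℓ (i - 1) 0)).Nonempty := by
    rcases Finset.eq_empty_or_nonempty
      ((Finset.Icc 1 n).filter (fun i => ℓ i 0 = ℓ (i - 1) 0)) with he | h
    · rw [hLdef, he] at hjL
      simp at hjL
      omega
    · exact h
  obtain ⟨b, hb, hsupb⟩ := Finset.exists_mem_eq_sup _ hLne id
  have hLmem : L ∈ (Finset.Icc 1 n).filter (fun i => ℓ i 0 = ℓ (i - 1) 0) := by
    rw [hLdef, hsupb]; exact hb
  rw [Finset.mem_filter, Finset.mem_Icc] at hLmem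
  obtain ⟨⟨hL1, hLn⟩, hLf⟩ := hLmem
  have hP := Pzero n η ℓ hbound hds hmono L
  set c : ↥(Finset.Icc 1 L) → Fin (n + 2) := fun z => ((z : ℕ) : Fin (n + 2)) with hc
  have hzmem : ∀ z : ↥(Finset.Icc 1 L), 1 ≤ (z : ℕ) ∧ (z : ℕ) ≤ L := by
    intro z; have := z.2; rw [Finset.mem_Icc] at this; exact this
  have hcv : ∀ z : ↥(Finset.Icc 1 L), ((c z) : ℕ) = (z : ℕ) := by
    intro z
    exact Fin.val_cast_of_lt (by have := hzmem z; omega)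
  have hcinj : Function.Injective c := by
    intro z₁ z₂ h
    have h2 : ((c z₁) : ℕ) = ((c z₂) : ℕ) := by rw [h]
    rw [hcv, hcv] at h2
    exact Subtype.ext h2
  set Y : ↥(Finset.Icc 1 L) → (Fin (n + 2) → ℝ) :=
    fun z i => Pmat n η ℓ i (c z) - Pmat n η ℓ i (Fin.last (n + 1)) with hY
  set B : ↥(Finset.Icc 1 L) → (Fin (n + 2) → ℝ) := fun z => Pi.single (c z) 1 with hB
  have hBli : LinearIndependent ℝ B := by
    have h1 := (Pi.basisFun ℝ (Fin (n + 2))).linearIndependent.comp c hcinj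
    convert h1 using 1
    funext z
    simp [hB, Pi.basisFun_apply]
  have hcard : Fintype.card ↥(Finset.Icc 1 L) = L := by
    rw [Fintype.card_coe, Nat.card_Icc]
    omega
  have hBrank : Module.finrank ℝ (Submodule.span ℝ (Set.range B)) = L := by
    rw [finrank_span_eq_card hBli, hcard]
  have hYzero : ∀ z : ↥(Finset.Icc 1 L), ∀ i : Fin (n + 2), ((i : ℕ) = 0 ∨ L + 1 ≤ (i : ℕ)) → Y z i = 0 := by
    intro z i hi
    have hzz := hP (z : ℕ) hL1 hLn hLf (hzmem z).1 (hzmem z).2 i hi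
    rw [hY]
    simp only
    rw [hc]
    simp only
    rw [hzz, sub_self]
  have hmem : ∀ v : Fin (n + 2) → ℝ,
      (∀ i : Fin (n + 2), ((i : ℕ) = 0 ∨ L + 1 ≤ (i : ℕ)) → v i = 0) →
      v ∈ Submodule.span ℝ (Set.range B) := by
    intro v hv
    have hrep : v = ∑ z : ↥(Finset.Icc 1 L), v (c z) • B z := by
      funext i
      rw [Finset.sum_apply]
      by_cases hi : 1 ≤ (i : ℕ) ∧ (i : ℕ) ≤ L
      · have himem : (i : ℕ) ∈ Finset.Icc 1 L := by rw [Finset.mem_Icc]; exact hi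
        have hci : c ⟨(i : ℕ), himem⟩ = i := by
          apply Fin.ext
          rw [hcv]
        rw [Finset.sum_eq_single (⟨(i : ℕ), himem⟩ : ↥(Finset.Icc 1 L))]
        · simp [hB, hci]
        · intro z _ hz
          have hne : c z ≠ i := by
            intro hcz
            apply hz
            apply Subtype.ext
            rw [← hcv z, hcz]
          rw [hB]
          simp only [Pi.smul_apply, smul_eq_mul]
          rw [Pi.single_eq_of_ne (fun h => hne h.symm)]
          ring
        · intro h
          exact absurd (Finset.mem_univ _) h
      · have hv0 : v i = 0 := hv i (by omega)
        rw [hv0]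
        symm
        apply Finset.sum_eq_zero
        intro z _
        have hne : c z ≠ i := by
          intro hcz
          have h3 := hcv z
          rw [hcz] at h3
          have := hzmem z
          omega
        rw [hB]
        simp only [Pi.smul_apply, smul_eq_mul]
        rw [Pi.single_eq_of_ne (fun h => hne h.symm)]
        ring
    rw [hrep]
    exact Submodule.sum_mem _ fun z _ =>
      Submodule.smul_mem _ _ (Submodule.subset_span ⟨z, rfl⟩)
  have hclast : ∀ z : ↥(Finset.Icc 1 L), c z ≠ Fin.last (n + 1) := by
    intro z h
    have h3 := hcv z
    rw [h] at h3
    simp only [Fin.val_last] at h3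
    have := hzmem z
    omega
  have hYli : LinearIndependent ℝ Y := by
    rw [Fintype.linearIndependent_iff]
    intro g hg z
    set d : Fin (n + 2) → ℝ :=
      (∑ w : ↥(Finset.Icc 1 L), g w • (Pi.single (c w) (1 : ℝ) - Pi.single (Fin.last (n + 1)) 1)) with hd
    have hPd : (Pmat n η ℓ).mulVec d = 0 := by
      have hlin : (Pmat n η ℓ).mulVec d = ∑ w : ↥(Finset.Icc 1 L), g w • ((Pmat n η ℓ).mulVec
          (Pi.single (c w) (1 : ℝ) - Pi.single (Fin.last (n + 1)) 1)) := by
        rw [hd, ← Matrix.mulVecLin_apply, map_sum]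
        simp [Matrix.mulVecLin_apply]
      rw [hlin]
      funext i
      have hterm : ∀ w : ↥(Finset.Icc 1 L), (g w • ((Pmat n η ℓ).mulVec
          (Pi.single (c w) (1 : ℝ) - Pi.single (Fin.last (n + 1)) 1))) i = (g w • Y w) i := by
        intro w
        simp only [Pi.smul_apply, smul_eq_mul]
        rw [Matrix.mulVec_sub, Matrix.mulVec_single, Matrix.mulVec_single]
        rw [hY]
        simp [mul_one]
      rw [Finset.sum_apply]
      rw [Finset.sum_congr rfl (fun w _ => hterm w), ← Finset.sum_apply, hg]
    have hinj : Function.Injective (Pmat n η ℓ).mulVec :=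
      Matrix.mulVec_injective_iff_isUnit.2
        ((Matrix.isUnit_iff_isUnit_det _).2 (isUnit_iff_ne_zero.2 hdet))
    have hd0 : d = 0 := by
      apply hinj
      rw [hPd, Matrix.mulVec_zero]
    have hev := congrFun hd0 (c z)
    rw [hd, Finset.sum_apply] at hev
    rw [Finset.sum_eq_single z] at hev
    · simp only [Pi.smul_apply, Pi.sub_apply, smul_eq_mul, Pi.single_eq_same,
        Pi.single_eq_of_ne (fun h => (hclast z) h), sub_zero, mul_one, Pi.zero_apply] at hev
      exact hev
    · intro w _ hw
      have hne : c z ≠ c w := fun h => hw (hcinj h).symm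
      simp only [Pi.smul_apply, Pi.sub_apply, smul_eq_mul,
        Pi.single_eq_of_ne hne, Pi.single_eq_of_ne (fun h => (hclast z) h), sub_zero]
      ring
    · intro h
      exact absurd (Finset.mem_univ _) h
  have hYrank : Module.finrank ℝ (Submodule.span ℝ (Set.range Y)) = L := by
    rw [finrank_span_eq_card hYli, hcard]
  have hspanle : Submodule.span ℝ (Set.range Y) ≤ Submodule.span ℝ (Set.range B) := by
    rw [Submodule.span_le]
    rintro _ ⟨z, rfl⟩
    exact hmem (Y z) (hYzero z)
  have hEq : Submodule.span ℝ (Set.range Y) = Submodule.span ℝ (Set.range B) :=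
    Submodule.eq_of_le_of_finrank_le hspanle (by rw [hBrank, hYrank])
  have hjmem : j ∈ Finset.Icc 1 L := by rw [Finset.mem_Icc]; exact ⟨hj1, hjL⟩
  set z₀ : ↥(Finset.Icc 1 L) := ⟨j, hjmem⟩ with hz₀
  have hBz : B z₀ ∈ Submodule.span ℝ (Set.range Y) := by
    rw [hEq]
    exact Submodule.subset_span ⟨z₀, rfl⟩
  obtain ⟨g, hg⟩ := (Submodule.mem_span_range_iff_exists_fun ℝ).1 hBz
  have hdotY : ∀ z : ↥(Finset.Icc 1 L), (∑ i : Fin (n + 2), μ i * Y z i) = 0 := by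
    intro z
    have h1 := congrFun hμ (c z)
    have h2 := congrFun hμ (Fin.last (n + 1))
    have hcz0 : c z ≠ 0 := by
      intro h
      have h3 := hcv z
      rw [h] at h3
      have := hzmem z
      simp at h3
      omega
    have hlast0 : Fin.last (n + 1) ≠ 0 := by
      intro h
      have : (Fin.last (n + 1) : ℕ) = 0 := by rw [h]; rfl
      simp at this
    rw [if_neg hcz0] at h1
    rw [if_neg hlast0] at h2
    simp only [Matrix.vecMul, dotProduct] at h1 h2
    have : ∀ i : Fin (n + 2), μ i * Y z i
        = μ i * Pmat n η ℓ i (c z) - μ i * Pmat n η ℓ i (Fin.last (n + 1)) := by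
      intro i
      rw [hY]
      simp only
      ring
    rw [Finset.sum_congr rfl (fun i _ => this i), Finset.sum_sub_distrib, h1, h2, sub_zero]
  have hfinal : μ ((j : ℕ) : Fin (n + 2)) = ∑ i : Fin (n + 2), μ i * B z₀ i := by
    rw [hB]
    simp only
    rw [Finset.sum_eq_single (c z₀)]
    · rw [Pi.single_eq_same, mul_one]
    · intro b' _ hb'
      rw [Pi.single_eq_of_ne hb', mul_zero]
    · intro h
      exact absurd (Finset.mem_univ _) h
  rw [hfinal, ← hg]
  have hswap : ∑ i : Fin (n + 2), μ i * (∑ z : ↥(Finset.Icc 1 L), g z • Y z) i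
      = ∑ z : ↥(Finset.Icc 1 L), g z * (∑ i : Fin (n + 2), μ i * Y z i) := by
    simp only [Finset.sum_apply, Pi.smul_apply, smul_eq_mul, Finset.mul_sum]
    rw [Finset.sum_comm]
    apply Finset.sum_congr rfl
    intro z _
    apply Finset.sum_congr rfl
    intro i _
    ring
  rw [hswap]
  apply Finset.sum_eq_zero
  intro z _
  rw [hdotY z, mul_zero]
end

section
/- If det P ≠ 0, then for every k ∈ [n], ∑_{j=1}^{k} (f([j:n],{k}) − ℓ_{j−1,s})·μ_j = (ℓ_{k,s} − ℓ_{k−1,s})·μ_{k+1}. -/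
open Finset
open Fin.NatCast

lemma rank_Dcol {R C : Type*} [Fintype R] [Fintype C] [DecidableEq R] [DecidableEq C]
    (η M : ℕ) (hM : M ≤ η) (m : R → ℕ) (i0 : R) (h0 : m i0 = M) (hle : ∀ i, m i ≤ M)
    (c0 : C) (A : Matrix (R × Fin η) (C × Fin η) (ZMod 2))
    (hA : ∀ p q, A p q = Dblk η (m p.1) p.2 q.2) : A.rank = M := by
  have hupper : A.rank ≤ M := by
    set N : Matrix (R × Fin η) (Fin M) (ZMod 2) := fun p j =>
      if ((j : ℕ) < m p.1 ∧ (p.2 : ℕ) = (j : ℕ) + (η - m p.1)) then 1 else 0 with hN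
    set E : Matrix (Fin M) (C × Fin η) (ZMod 2) := fun j q =>
      if (q.2 : ℕ) = (j : ℕ) then 1 else 0 with hE
    have hfac : A = N * E := by
      ext p q
      rw [Matrix.mul_apply, hA]
      by_cases h : (q.2 : ℕ) < M
      · rw [Finset.sum_eq_single (⟨(q.2 : ℕ), h⟩ : Fin M)]
        · simp [hN, hE, Dblk]
        · intro b _ hb
          simp only [hN, hE]
          have : ¬ ((q.2 : ℕ) = (b : ℕ)) := fun hc => hb (by ext; simp [hc.symm])
          simp [this]
        · simp
      · have h1 : Dblk η (m p.1) p.2 q.2 = 0 := by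
          simp only [Dblk, Matrix.of_apply, ite_eq_right_iff]
          intro hc
          exact absurd (lt_of_lt_of_le hc.1 (hle p.1)) h
        rw [h1]
        refine (Finset.sum_eq_zero fun b _ => ?_).symm
        have : ¬ ((q.2 : ℕ) = (b : ℕ)) := fun hc => h (hc ▸ b.isLt)
        simp [hN, hE, this]
    calc A.rank = (N * E).rank := by rw [hfac]
      _ ≤ N.rank := Matrix.rank_mul_le_left N E
      _ ≤ Fintype.card (Fin M) := Matrix.rank_le_card_width N
      _ = M := Fintype.card_fin M
  have hlower : M ≤ A.rank := by
    set F : Matrix (Fin M) (R × Fin η) (ZMod 2) := fun a p =>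
      if (p.1 = i0 ∧ (p.2 : ℕ) = (a : ℕ) + (η - M)) then 1 else 0 with hF
    set G : Matrix (C × Fin η) (Fin M) (ZMod 2) := fun q b =>
      if (q.1 = c0 ∧ (q.2 : ℕ) = (b : ℕ)) then 1 else 0 with hG
    have hid : F * A * G = (1 : Matrix (Fin M) (Fin M) (ZMod 2)) := by
      ext a b
      have hab : (a : ℕ) + (η - M) < η := by omega
      have hbb : (b : ℕ) < η := lt_of_lt_of_le b.isLt hM
      rw [Matrix.mul_apply]
      rw [Finset.sum_eq_single ((c0, ⟨(b : ℕ), hbb⟩) : C × Fin η)]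
      · rw [Matrix.mul_apply]
        rw [Finset.sum_eq_single ((i0, ⟨(a : ℕ) + (η - M), hab⟩) : R × Fin η)]
        · simp only [hF, hA, hG, Dblk, Matrix.of_apply, if_pos (⟨rfl, rfl⟩ : i0 = i0 ∧ _), one_mul, if_pos (⟨rfl, rfl⟩ : c0 = c0 ∧ _), mul_one, h0]
          by_cases hab' : (a : ℕ) = (b : ℕ)
          · have : a = b := Fin.ext hab'
            simp [this, Matrix.one_apply, b.isLt]
          · have : ¬((b:ℕ) < M ∧ (a : ℕ) + (η - M) = (b:ℕ) + (η - M)) := by omega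
            simp [this, Matrix.one_apply, Fin.ext_iff, hab']
        · intro p _ hp
          have : ¬(p.1 = i0 ∧ (p.2 : ℕ) = (a : ℕ) + (η - M)) := by
            rintro ⟨h1, h2⟩
            exact hp (Prod.ext h1 (Fin.ext h2))
          simp [hF, this]
        · simp
      · intro q _ hq
        have : ¬(q.1 = c0 ∧ (q.2 : ℕ) = (b : ℕ)) := by
          rintro ⟨h1, h2⟩
          exact hq (Prod.ext h1 (Fin.ext (by simpa using h2)))
        simp [hG, this]
      · simp
    calc M = (1 : Matrix (Fin M) (Fin M) (ZMod 2)).rank := by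
            rw [Matrix.rank_one, Fintype.card_fin]
      _ = (F * A * G).rank := by rw [hid]
      _ ≤ (F * A).rank := Matrix.rank_mul_le_left _ _
      _ ≤ A.rank := Matrix.rank_mul_le_right _ _
  omega

lemma fRank_eq_s16 (n η : ℕ) (ℓ : ℕ → ℕ → ℕ) (Ω S : Finset ℕ) (hdisj : Ω ∩ S = ∅)
    (M : ℕ) (hM : M ≤ η) (i0 : ℕ) (hi0 : i0 ∈ rowIdx n Ω S) (h0 : ℓ i0 0 = M)
    (hle : ∀ i ∈ rowIdx n Ω S, ℓ i 0 ≤ M) : fRank n η ℓ Ω S = M := by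
  have hcol : colIdx Ω S = {0} := by rw [colIdx, hdisj]; rfl
  have hq0 : ∀ q : ↥(colIdx Ω S), (q : ℕ) = 0 := by
    rintro ⟨q, hq⟩
    rw [hcol] at hq
    simpa using hq
  refine rank_Dcol η M hM (fun i : ↥(rowIdx n Ω S) => ℓ (i : ℕ) 0) ⟨i0, hi0⟩ h0
    (fun i => hle i i.2) ⟨0, by simp [hcol]⟩ _ ?_
  intro p q
  simp [hq0 q.1]

lemma corM (n η : ℕ) (ℓ : ℕ → ℕ → ℕ)
    (hbound : ∀ i ≤ n, ∀ j ≤ n, ℓ i j ≤ η) (hds : ℓ 0 0 = 0)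
    (hmono : ∀ i j, 1 ≤ i → i ≤ j → j ≤ n → ℓ i 0 ≤ ℓ j 0)
    (j : ℕ) (S : Finset ℕ) (hj1 : 1 ≤ j) (hjn : j ≤ n + 1)
    (hdisj : Finset.Icc j n ∩ S = ∅) (hnot : j - 1 ∉ S) :
    fRank n η ℓ (Finset.Icc j n) S = ℓ (j-1) 0 := by
  refine fRank_eq_s16 n η ℓ _ S hdisj (ℓ (j-1) 0) (hbound (j-1) (by omega) 0 (by omega))
    (j-1) ?_ rfl ?_
  · rcases Nat.eq_or_lt_of_le hj1 with h | h
    · rw [← h]; exact Finset.mem_insert_self 0 _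
    · refine Finset.mem_insert_of_mem ?_
      simp only [Finset.mem_sdiff, Finset.mem_Icc]
      refine ⟨⟨⟨by omega, by omega⟩, ?_⟩, hnot⟩
      omega
  · intro i hi
    simp only [rowIdx, Finset.mem_insert, Finset.mem_sdiff, Finset.mem_Icc] at hi
    rcases hi with rfl | ⟨⟨⟨h1, h2⟩, h3⟩, h4⟩
    · rw [hds]; exact Nat.zero_le _
    · exact hmono i (j-1) h1 (by omega) (by omega)

lemma cor1 (n η : ℕ) (ℓ : ℕ → ℕ → ℕ)
    (hbound : ∀ i ≤ n, ∀ j ≤ n, ℓ i j ≤ η) (hds : ℓ 0 0 = 0)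
    (hmono : ∀ i j, 1 ≤ i → i ≤ j → j ≤ n → ℓ i 0 ≤ ℓ j 0)
    (k : ℕ) (hk1 : 1 ≤ k) (hkn : k ≤ n) :
    fRank n η ℓ (Finset.Icc (k+1) n) {k} = ℓ (k-1) 0 := by
  refine fRank_eq_s16 n η ℓ _ _ ?_ (ℓ (k-1) 0) (hbound (k-1) (by omega) 0 (by omega))
    (k-1) ?_ rfl ?_
  · ext x; simp only [Finset.mem_inter, Finset.mem_Icc, Finset.mem_singleton,
      Finset.notMem_empty, iff_false]; omega
  · rcases Nat.eq_or_lt_of_le hk1 with h | h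
    · rw [← h]; exact Finset.mem_insert_self 0 _
    · refine Finset.mem_insert_of_mem ?_
      simp only [Finset.mem_sdiff, Finset.mem_Icc, Finset.mem_singleton]
      exact ⟨⟨⟨by omega, by omega⟩, by omega⟩, by omega⟩
  · intro i hi
    simp only [rowIdx, Finset.mem_insert, Finset.mem_sdiff, Finset.mem_Icc,
      Finset.mem_singleton] at hi
    rcases hi with rfl | ⟨⟨⟨h1, h2⟩, h3⟩, h4⟩
    · rw [hds]; exact Nat.zero_le _
    · exact hmono i (k-1) h1 (by omega) (by omega)


theorem stmt16 (n η : ℕ) (hn : 1 ≤ n) (hη : 1 ≤ η) (ℓ : ℕ → ℕ → ℕ)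
    (hbound : ∀ i ≤ n, ∀ j ≤ n, ℓ i j ≤ η)
    (hds : ℓ 0 0 = 0) (hii : ∀ i, 1 ≤ i → i ≤ n → ℓ i i = 0)
    (hmono : ∀ i j, 1 ≤ i → i ≤ j → j ≤ n → ℓ i 0 ≤ ℓ j 0)
    (hdet : (Pmat n η ℓ).det ≠ 0)
    (μ : Fin (n + 2) → ℝ)
    (hμ : Matrix.vecMul μ (Pmat n η ℓ) = fun k => if k = 0 then 1 else 0) :
    ∀ k ∈ Finset.Icc 1 n,
      ∑ j ∈ Finset.Icc 1 k,
          ((fRank n η ℓ (Finset.Icc j n) {k} : ℝ) - (ℓ (j - 1) 0 : ℝ)) * μ (j : Fin (n + 2))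
        = ((ℓ k 0 : ℝ) - (ℓ (k - 1) 0 : ℝ)) * μ ((k + 1 : ℕ) : Fin (n + 2)) := by
  intro k hk
  rw [Finset.mem_Icc] at hk
  obtain ⟨hk1, hkn⟩ := hk
  have key : ∀ c : Fin (n+2), (c : ℕ) ≠ 0 →
      ∑ i ∈ Finset.Icc 1 (n+1),
        μ (i : Fin (n+2)) * (fRank n η ℓ (Finset.Icc i n)
          (if (c : ℕ) = n + 1 then (∅ : Finset ℕ) else {(c : ℕ)}) : ℝ) = μ 0 := by
    intro c hc
    have h := congrFun hμ c
    have hc' : c ≠ 0 := fun h0 => hc (by simp [h0])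
    rw [if_neg hc'] at h
    rw [Matrix.vecMul, dotProduct] at h
    have h1 : ∑ i : Fin (n+2), μ i * Pmat n η ℓ i c
        = ∑ i ∈ Finset.range (n+2),
            μ (i : Fin (n+2)) * Pmat n η ℓ (i : Fin (n+2)) c := by
      rw [← Fin.sum_univ_eq_sum_range (fun i =>
        μ (i : Fin (n+2)) * Pmat n η ℓ (i : Fin (n+2)) c)]
      exact Finset.sum_congr rfl fun i _ => by rw [Fin.cast_val_eq_self]
    have h2 : Finset.range (n+2) = insert 0 (Finset.Icc 1 (n+1)) := by
      ext x
      simp only [Finset.mem_range, Finset.mem_insert, Finset.mem_Icc]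
      omega
    have hP0 : Pmat n η ℓ ((0 : ℕ) : Fin (n+2)) c = 1 := by
      simp [Pmat, hc, hc']
    have hPi : ∀ i ∈ Finset.Icc 1 (n+1), Pmat n η ℓ (i : Fin (n+2)) c
        = -(fRank n η ℓ (Finset.Icc i n)
            (if (c : ℕ) = n + 1 then (∅ : Finset ℕ) else {(c : ℕ)}) : ℝ) := by
      intro i hi
      rw [Finset.mem_Icc] at hi
      have hival : ((i : Fin (n+2)) : ℕ) = i := Fin.val_cast_of_lt (by omega)
      simp only [Pmat, Matrix.of_apply, hival]
      rw [if_neg (by omega), if_neg hc]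
    rw [h1, h2, Finset.sum_insert (by simp), hP0, mul_one] at h
    rw [Finset.sum_congr rfl (fun i hi => by rw [hPi i hi])] at h
    simp only [mul_neg] at h
    rw [Finset.sum_neg_distrib] at h
    simp only [Nat.cast_zero] at h
    linarith
  have E1 : ∑ j ∈ Finset.Icc 1 (n+1),
      μ (j : Fin (n+2)) * (fRank n η ℓ (Finset.Icc j n) {k} : ℝ) = μ 0 := by
    have hval : (((k : ℕ) : Fin (n+2)) : ℕ) = k := Fin.val_cast_of_lt (by omega)
    have hkey := key ((k : ℕ) : Fin (n+2)) (by rw [hval]; omega)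
    rw [hval, if_neg (by omega)] at hkey
    exact hkey
  have E2 : ∑ j ∈ Finset.Icc 1 (n+1),
      μ (j : Fin (n+2)) * (ℓ (j-1) 0 : ℝ) = μ 0 := by
    have hval : (((n+1 : ℕ) : Fin (n+2)) : ℕ) = n+1 := Fin.val_cast_of_lt (by omega)
    have hkey := key ((n+1 : ℕ) : Fin (n+2)) (by rw [hval]; omega)
    rw [hval, if_pos rfl] at hkey
    rw [← hkey]
    refine Finset.sum_congr rfl fun j hj => ?_
    rw [Finset.mem_Icc] at hj
    rw [corM n η ℓ hbound hds hmono j ∅ hj.1 hj.2 (Finset.inter_empty _)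
      (Finset.notMem_empty _)]
  set d : ℕ → ℝ := fun j => μ (j : Fin (n+2)) * (fRank n η ℓ (Finset.Icc j n) {k} : ℝ)
      - μ (j : Fin (n+2)) * (ℓ (j-1) 0 : ℝ) with hd
  have hIcc : ∀ m : ℕ, Finset.Icc 1 m = Finset.Ioc 0 m := fun m => by
    rw [← Finset.Icc_add_one_left_eq_Ioc, zero_add]
  have htot : ∑ j ∈ Finset.Ioc 0 (n+1), d j = 0 := by
    rw [← hIcc, hd, Finset.sum_sub_distrib, E1, E2, sub_self]
  have hzero : ∑ j ∈ Finset.Ioc (k+1) (n+1), d j = 0 := by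
    refine Finset.sum_eq_zero fun j hj => ?_
    rw [Finset.mem_Ioc] at hj
    have : fRank n η ℓ (Finset.Icc j n) {k} = ℓ (j-1) 0 := by
      refine corM n η ℓ hbound hds hmono j {k} (by omega) hj.2 ?_ ?_
      · ext x
        simp only [Finset.mem_inter, Finset.mem_Icc, Finset.mem_singleton,
          Finset.notMem_empty, iff_false]
        omega
      · simp only [Finset.mem_singleton]; omega
    rw [hd]
    simp [this]
  have hsplit1 : ∑ j ∈ Finset.Ioc 0 k, d j + ∑ j ∈ Finset.Ioc k (n+1), d j
      = ∑ j ∈ Finset.Ioc 0 (n+1), d j :=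
    Finset.sum_Ioc_consecutive d (by omega) (by omega)
  have hsplit2 : ∑ j ∈ Finset.Ioc k (k+1), d j + ∑ j ∈ Finset.Ioc (k+1) (n+1), d j
      = ∑ j ∈ Finset.Ioc k (n+1), d j :=
    Finset.sum_Ioc_consecutive d (by omega) (by omega)
  have hsing : ∑ j ∈ Finset.Ioc k (k+1), d j = d (k+1) := by
    rw [Nat.Ioc_succ_singleton, Finset.sum_singleton]
  have hd1 : d (k+1) = μ ((k+1 : ℕ) : Fin (n+2)) * (ℓ (k-1) 0 : ℝ)
      - μ ((k+1 : ℕ) : Fin (n+2)) * (ℓ k 0 : ℝ) := by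
    rw [hd]
    simp only [Nat.add_sub_cancel]
    rw [cor1 n η ℓ hbound hds hmono k hk1 hkn]
  have hLHS : ∑ j ∈ Finset.Icc 1 k,
      ((fRank n η ℓ (Finset.Icc j n) {k} : ℝ) - (ℓ (j - 1) 0 : ℝ)) * μ (j : Fin (n + 2))
      = ∑ j ∈ Finset.Ioc 0 k, d j := by
    rw [← hIcc]
    refine Finset.sum_congr rfl fun j _ => ?_
    rw [hd]
    ring
  rw [hLHS]
  have : ∑ j ∈ Finset.Ioc 0 k, d j = - d (k+1) := by linarith
  rw [this, hd1]
  ring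
end

section
/- If det P ≠ 0, then for every i ∈ [n], λ*_{{i}}·(ℓ_{i,s} − ℓ_{i−1,s}) = (ℓ_{i,s} − t*) + ∑_{j=i+1}^{n} λ*_{{j}}·(f([i+1:n],{j}) − ℓ_{i,s}). -/
open Finset
open Fin.NatCast

lemma rank_Dcol_s17 {A B : Type*} [Fintype A] [Fintype B] [Nonempty B] (η : ℕ) (m : A → ℕ)
    (a0 : A) (hmax : ∀ a, m a ≤ m a0) (h0 : m a0 ≤ η) :
    (Matrix.of fun (p : A × Fin η) (q : B × Fin η) => Dblk η (m p.1) p.2 q.2).rank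
      = m a0 := by
  classical
  set s := m a0 with hs
  set M : Matrix (A × Fin η) (B × Fin η) (ZMod 2) :=
    Matrix.of fun p q => Dblk η (m p.1) p.2 q.2 with hM
  -- the candidate basis of the column space
  set b : Fin s → (A × Fin η → ZMod 2) :=
    fun c p => if (c : ℕ) < m p.1 ∧ (p.2 : ℕ) = (c : ℕ) + (η - m p.1) then 1 else 0 with hb
  have hbcol : ∀ (β : B) (c : Fin η) (hc : (c : ℕ) < s), M.transpose (β, c) = b ⟨c, hc⟩ := by
    intro β c hc
    funext p
    simp [hM, hb, Matrix.transpose_apply, Dblk]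
  have hzero : ∀ (β : B) (c : Fin η), s ≤ (c : ℕ) → M.transpose (β, c) = 0 := by
    intro β c hc
    funext p
    have : ¬ ((c : ℕ) < m p.1) := by
      have := hmax p.1; omega
    simp [hM, Matrix.transpose_apply, Dblk, this]
  have hli : LinearIndependent (ZMod 2) b := by
    rw [Fintype.linearIndependent_iff]
    intro g hg c0
    have hc0 : (c0 : ℕ) + (η - s) < η := by omega
    have := congrFun hg (a0, ⟨(c0 : ℕ) + (η - s), hc0⟩)
    simp only [Finset.sum_apply, Pi.smul_apply, Pi.zero_apply, smul_eq_mul, hb] at this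
    rw [Finset.sum_eq_single c0] at this
    · rw [if_pos ⟨(by rw [← hs]; exact c0.2), rfl⟩, mul_one] at this
      exact this
    · intro c _ hne
      have h2 : ¬((c0 : ℕ) + (η - m a0) = (c:ℕ) + (η - m a0)) := by
        intro h
        exact hne (Fin.ext (by omega))
      simp [h2]
      intro _ h
      exact absurd h h2
    · simp
  have hspan : Submodule.span (ZMod 2) (Set.range M.transpose)
      = Submodule.span (ZMod 2) (Set.range b) := by
    apply le_antisymm
    · rw [Submodule.span_le]
      rintro _ ⟨⟨β, c⟩, rfl⟩
      by_cases hc : (c : ℕ) < s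
      · rw [hbcol β c hc]
        exact Submodule.subset_span ⟨_, rfl⟩
      · rw [hzero β c (le_of_not_gt hc)]
        exact Submodule.zero_mem _
    · rw [Submodule.span_le]
      rintro _ ⟨c, rfl⟩
      have hc : (c : ℕ) < η := lt_of_lt_of_le c.2 h0
      have : b c = M.transpose (Classical.arbitrary B, ⟨(c : ℕ), hc⟩) := by
        rw [hbcol _ _ (by simpa using c.2)]
      rw [this]
      exact Submodule.subset_span ⟨_, rfl⟩
  rw [Matrix.rank_eq_finrank_span_cols]
  change Module.finrank (ZMod 2) ↥(Submodule.span (ZMod 2) (Set.range M.transpose)) = s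
  rw [hspan, finrank_span_eq_card hli,
    Fintype.card_fin]

lemma fRank_eq_sup (n η : ℕ) (ℓ : ℕ → ℕ → ℕ) (Ω S : Finset ℕ) (hdisj : Ω ∩ S = ∅)
    (hb : ∀ k ∈ rowIdx n Ω S, ℓ k 0 ≤ η) :
    fRank n η ℓ Ω S = (rowIdx n Ω S).sup (fun k => ℓ k 0) := by
  classical
  have hne : (rowIdx n Ω S).Nonempty := ⟨0, Finset.mem_insert_self _ _⟩
  obtain ⟨a0, ha0, hsup⟩ := Finset.exists_mem_eq_sup _ hne (fun k => ℓ k 0)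
  have hcol0 : ∀ q : ↥(colIdx Ω S), (q : ℕ) = 0 := by
    intro q
    have hq := q.2
    simp only [colIdx, hdisj, Finset.mem_insert, Finset.notMem_empty, or_false] at hq
    exact hq
  have hcne : Nonempty ↥(colIdx Ω S) := ⟨⟨0, Finset.mem_insert_self _ _⟩⟩
  have hMeq : (Matrix.of fun (p : ↥(rowIdx n Ω S) × Fin η) (q : ↥(colIdx Ω S) × Fin η) =>
      Dblk η (ℓ (p.1 : ℕ) (q.1 : ℕ)) p.2 q.2)
      = Matrix.of fun (p : ↥(rowIdx n Ω S) × Fin η) (q : ↥(colIdx Ω S) × Fin η) =>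
          Dblk η ((fun a : ↥(rowIdx n Ω S) => ℓ (a : ℕ) 0) p.1) p.2 q.2 := by
    funext p q
    simp only [Matrix.of_apply]
    rw [hcol0 q.1]
  rw [fRank, hMeq,
    rank_Dcol_s17 η (fun a : ↥(rowIdx n Ω S) => ℓ (a : ℕ) 0) ⟨a0, ha0⟩
      (fun a => le_of_le_of_eq (Finset.le_sup (f := fun k => ℓ k 0) a.2) hsup)
      (hb a0 ha0)]
  exact hsup.symm

section main
variable (n η : ℕ) (ℓ : ℕ → ℕ → ℕ)

lemma sup_insert_Icc (hds : ℓ 0 0 = 0)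
    (hmono : ∀ i j, 1 ≤ i → i ≤ j → j ≤ n → ℓ i 0 ≤ ℓ j 0)
    (k : ℕ) (hk : k ≤ n) :
    (insert 0 (Finset.Icc 1 k)).sup (fun j => ℓ j 0) = ℓ k 0 := by
  apply Nat.le_antisymm
  · apply Finset.sup_le
    intro j hj
    rcases Finset.mem_insert.1 hj with rfl | hj
    · simp [hds]
    · rw [Finset.mem_Icc] at hj
      exact hmono j k hj.1 hj.2 hk
  · rcases Nat.eq_zero_or_pos k with rfl | hk1
    · rw [hds]
      exact Nat.zero_le _
    · exact Finset.le_sup (f := fun j => ℓ j 0) (Finset.mem_insert_of_mem (Finset.mem_Icc.2 ⟨hk1, le_refl k⟩))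

lemma sup_insert_Icc_erase (hds : ℓ 0 0 = 0)
    (hmono : ∀ i j, 1 ≤ i → i ≤ j → j ≤ n → ℓ i 0 ≤ ℓ j 0)
    (i j : ℕ) (hi1 : 1 ≤ i) (hin : i ≤ n) (hj : j ≠ i) :
    (insert 0 (Finset.Icc 1 i \ {j})).sup (fun k => ℓ k 0) = ℓ i 0 := by
  apply Nat.le_antisymm
  · apply Finset.sup_le
    intro k hk
    rcases Finset.mem_insert.1 hk with rfl | hk
    · simp [hds]
    · rw [Finset.mem_sdiff, Finset.mem_Icc] at hk
      exact hmono k i hk.1.1 hk.1.2 hin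
  · refine Finset.le_sup (f := fun k => ℓ k 0) (Finset.mem_insert_of_mem ?_)
    rw [Finset.mem_sdiff, Finset.mem_Icc, Finset.mem_singleton]
    exact ⟨⟨hi1, le_refl i⟩, fun h => hj h.symm⟩

end main

theorem stmt17 (n η : ℕ) (hn : 1 ≤ n) (hη : 1 ≤ η) (ℓ : ℕ → ℕ → ℕ)
    (hbound : ∀ i ≤ n, ∀ j ≤ n, ℓ i j ≤ η)
    (hds : ℓ 0 0 = 0) (hii : ∀ i, 1 ≤ i → i ≤ n → ℓ i i = 0)
    (hmono : ∀ i j, 1 ≤ i → i ≤ j → j ≤ n → ℓ i 0 ≤ ℓ j 0)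
    (hdet : (Pmat n η ℓ).det ≠ 0)
    (v : Fin (n + 2) → ℝ)
    (hv : (Pmat n η ℓ).mulVec v = fun k => if k = 0 then 1 else 0) :
    ∀ i ∈ Finset.Icc 1 n,
      v (i : Fin (n + 2)) * ((ℓ i 0 : ℝ) - (ℓ (i - 1) 0 : ℝ))
        = ((ℓ i 0 : ℝ) - v 0)
          + ∑ j ∈ Finset.Icc (i + 1) n,
              v (j : Fin (n + 2))
                * ((fRank n η ℓ (Finset.Icc (i + 1) n) {j} : ℝ) - (ℓ i 0 : ℝ)) := by
  intro i hi
  rw [Finset.mem_Icc] at hi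
  obtain ⟨hi1, hin⟩ := hi
  have hbnd : ∀ Ω S, ∀ k ∈ rowIdx n Ω S, ℓ k 0 ≤ η := by
    intro Ω S k hk
    rcases Finset.mem_insert.1 hk with rfl | hk
    · rw [hds]; exact Nat.zero_le _
    · rw [Finset.mem_sdiff, Finset.mem_sdiff, Finset.mem_Icc] at hk
      exact hbound k hk.1.1.2 0 (Nat.zero_le _ |>.trans hn)
  -- splitting of the index range
  have hsplit : Finset.range (n+2) = insert 0 (insert (n+1) (Finset.Icc 1 n)) := by
    ext x; simp only [Finset.mem_range, Finset.mem_insert, Finset.mem_Icc]; omega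
  have h0not : 0 ∉ insert (n+1) (Finset.Icc 1 n) := by
    simp only [Finset.mem_insert, Finset.mem_Icc]; omega
  have h1not : (n+1) ∉ Finset.Icc 1 n := by
    simp only [Finset.mem_Icc]; omega
  -- Equation A : row 0
  have hA : v ((n+1 : ℕ) : Fin (n+2)) + ∑ j ∈ Finset.Icc 1 n, v (j : Fin (n+2)) = 1 := by
    have h0 := congrFun hv 0
    simp only [Matrix.mulVec, dotProduct, if_pos rfl] at h0
    have hterm : ∀ j : Fin (n+2), Pmat n η ℓ 0 j * v j
        = (if (j : ℕ) = 0 then (0:ℝ) else 1) * v (((j : ℕ) : Fin (n+2))) := by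
      intro j
      simp [Pmat, Fin.cast_val_eq_self]
    rw [Finset.sum_congr rfl (fun j _ => hterm j),
      Fin.sum_univ_eq_sum_range (fun j => (if j = 0 then (0:ℝ) else 1) * v ((j : Fin (n+2)))),
      hsplit, Finset.sum_insert h0not, Finset.sum_insert h1not] at h0
    have hsum : ∑ x ∈ Finset.Icc 1 n, (if x = 0 then (0:ℝ) else 1) * v ((x : Fin (n+2)))
        = ∑ x ∈ Finset.Icc 1 n, v ((x : Fin (n+2))) := by
      refine Finset.sum_congr rfl (fun j hj => ?_)
      rw [Finset.mem_Icc] at hj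
      rw [if_neg (by omega), one_mul]
    rw [hsum] at h0
    rw [if_pos rfl, zero_mul, zero_add, if_neg (Nat.succ_ne_zero n), one_mul,
      if_pos trivial] at h0
    exact h0
  -- Equation B : row i+1
  have hr : ((⟨i+1, by omega⟩ : Fin (n+2)) : ℕ) = i + 1 := rfl
  have hB : v 0 - (fRank n η ℓ (Finset.Icc (i+1) n) ∅ : ℝ) * v ((n+1 : ℕ) : Fin (n+2))
      - ∑ j ∈ Finset.Icc 1 n,
          (fRank n η ℓ (Finset.Icc (i+1) n) {j} : ℝ) * v (j : Fin (n+2)) = 0 := by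
    have h0 := congrFun hv ⟨i+1, by omega⟩
    have hrne : (⟨i+1, by omega⟩ : Fin (n+2)) ≠ 0 := by
      intro h
      have := congrArg Fin.val h
      simp at this
    rw [if_neg hrne] at h0
    simp only [Matrix.mulVec, dotProduct] at h0
    have hterm : ∀ j : Fin (n+2), Pmat n η ℓ ⟨i+1, by omega⟩ j * v j
        = (if (j : ℕ) = 0 then (1:ℝ) else
            -(fRank n η ℓ (Finset.Icc (i+1) n)
              (if (j : ℕ) = n + 1 then (∅ : Finset ℕ) else {(j : ℕ)}) : ℝ))
          * v (((j : ℕ) : Fin (n+2))) := by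
      intro j
      simp only [Pmat, Matrix.of_apply, hr, Fin.cast_val_eq_self]
      rw [if_neg (Nat.succ_ne_zero i)]
    rw [Finset.sum_congr rfl (fun j _ => hterm j),
      Fin.sum_univ_eq_sum_range (fun j => (if j = 0 then (1:ℝ) else
            -(fRank n η ℓ (Finset.Icc (i+1) n)
              (if j = n + 1 then (∅ : Finset ℕ) else {j}) : ℝ)) * v ((j : Fin (n+2)))),
      hsplit, Finset.sum_insert h0not, Finset.sum_insert h1not] at h0
    have hsum : ∑ x ∈ Finset.Icc 1 n, (if x = 0 then (1:ℝ) else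
            -(fRank n η ℓ (Finset.Icc (i+1) n)
              (if x = n + 1 then (∅ : Finset ℕ) else {x}) : ℝ)) * v ((x : Fin (n+2)))
        = ∑ x ∈ Finset.Icc 1 n,
            -((fRank n η ℓ (Finset.Icc (i+1) n) {x} : ℝ) * v ((x : Fin (n+2)))) := by
      refine Finset.sum_congr rfl (fun j hj => ?_)
      rw [Finset.mem_Icc] at hj
      rw [if_neg (by omega), if_neg (by omega), neg_mul]
    rw [hsum, Finset.sum_neg_distrib] at h0
    have hz : ((0:ℕ) : Fin (n+2)) = (0 : Fin (n+2)) := by simp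
    rw [if_pos rfl, if_pos rfl, one_mul, if_neg (Nat.succ_ne_zero n), hz] at h0
    linarith [h0]
  -- rank computations
  have hrowIdx : ∀ S : Finset ℕ,
      rowIdx n (Finset.Icc (i+1) n) S = insert 0 (Finset.Icc 1 i \ S) := by
    intro S
    unfold rowIdx
    congr 1
    ext x
    simp only [Finset.mem_sdiff, Finset.mem_Icc]
    by_cases hxS : x ∈ S <;> simp [hxS] <;> omega
  have hFempty : fRank n η ℓ (Finset.Icc (i+1) n) ∅ = ℓ i 0 := by
    rw [fRank_eq_sup n η ℓ _ _ (Finset.inter_empty _) (hbnd _ _), hrowIdx ∅,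
      Finset.sdiff_empty, sup_insert_Icc n ℓ hds hmono i hin]
  have hFlt : ∀ j, 1 ≤ j → j < i → fRank n η ℓ (Finset.Icc (i+1) n) {j} = ℓ i 0 := by
    intro j hj1 hj2
    have hd : Finset.Icc (i+1) n ∩ {j} = ∅ := by
      ext x; simp only [Finset.mem_inter, Finset.mem_Icc, Finset.mem_singleton,
        Finset.notMem_empty, iff_false]; omega
    rw [fRank_eq_sup n η ℓ _ _ hd (hbnd _ _), hrowIdx {j},
      sup_insert_Icc_erase n ℓ hds hmono i j hi1 hin (by omega)]
  have hFi : fRank n η ℓ (Finset.Icc (i+1) n) {i} = ℓ (i-1) 0 := by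
    have hd : Finset.Icc (i+1) n ∩ {i} = ∅ := by
      ext x; simp only [Finset.mem_inter, Finset.mem_Icc, Finset.mem_singleton,
        Finset.notMem_empty, iff_false]; omega
    have he : Finset.Icc 1 i \ {i} = Finset.Icc 1 (i-1) := by
      ext x; simp only [Finset.mem_sdiff, Finset.mem_Icc, Finset.mem_singleton]; omega
    rw [fRank_eq_sup n η ℓ _ _ hd (hbnd _ _), hrowIdx {i}, he,
      sup_insert_Icc n ℓ hds hmono (i-1) (by omega)]
  -- split the sums
  have hIccsplit : Finset.Icc 1 n = Finset.Icc 1 i ∪ Finset.Icc (i+1) n := by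
    ext x; simp only [Finset.mem_union, Finset.mem_Icc]; omega
  have hdisj2 : Disjoint (Finset.Icc 1 i) (Finset.Icc (i+1) n) := by
    rw [Finset.disjoint_left]
    intro a ha hb
    rw [Finset.mem_Icc] at ha hb
    omega
  have hIcc1i : Finset.Icc 1 i = insert i (Finset.Icc 1 (i-1)) := by
    ext x; simp only [Finset.mem_insert, Finset.mem_Icc]; omega
  have hinot : i ∉ Finset.Icc 1 (i-1) := by
    rw [Finset.mem_Icc]; omega
  rw [hIccsplit, Finset.sum_union hdisj2, hIcc1i, Finset.sum_insert hinot] at hA hB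
  have hs1 : ∑ j ∈ Finset.Icc 1 (i-1),
      (fRank n η ℓ (Finset.Icc (i+1) n) {j} : ℝ) * v (j : Fin (n+2))
      = (ℓ i 0 : ℝ) * ∑ j ∈ Finset.Icc 1 (i-1), v (j : Fin (n+2)) := by
    rw [Finset.mul_sum]
    refine Finset.sum_congr rfl (fun j hj => ?_)
    rw [Finset.mem_Icc] at hj
    rw [hFlt j hj.1 (by omega)]
  rw [hs1, hFi, hFempty] at hB
  have hgoal : ∑ j ∈ Finset.Icc (i+1) n,
      v (j : Fin (n+2)) * ((fRank n η ℓ (Finset.Icc (i+1) n) {j} : ℝ) - (ℓ i 0 : ℝ))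
      = (∑ j ∈ Finset.Icc (i+1) n,
          (fRank n η ℓ (Finset.Icc (i+1) n) {j} : ℝ) * v (j : Fin (n+2)))
        - (ℓ i 0 : ℝ) * ∑ j ∈ Finset.Icc (i+1) n, v (j : Fin (n+2)) := by
    rw [Finset.mul_sum, ← Finset.sum_sub_distrib]
    exact Finset.sum_congr rfl (fun j _ => by ring)
  rw [hgoal]
  linear_combination hB + (ℓ i 0 : ℝ) * hA
end

section
/- If j ∈ [n] satisfies ℓ_{j,s} = ℓ_{j−1,s} = f([j:n],{j}), then f([i:n],{j}) = ℓ_{i−1,s} = f([i:n],∅) for every i ∈ {1,…,n+1} (with [n+1:n] = ∅); in particular, the j-th and (n+1)-th columns of P coincide. -/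
open Finset
open Fin.NatCast

section Aux

open Submodule Module Matrix

variable {η : ℕ}

private def blockM {R C : Type*} (η : ℕ) (L : R → C → ℕ) :
    Matrix (R × Fin η) (C × Fin η) (ZMod 2) :=
  Matrix.of fun p q => Dblk η (L p.1 q.1) p.2 q.2

private lemma fRank_eq_blockM (n η : ℕ) (ℓ : ℕ → ℕ → ℕ) (Ω S : Finset ℕ) :
    fRank n η ℓ Ω S =
      (blockM η fun (r : ↥(rowIdx n Ω S)) (c : ↥(colIdx Ω S)) => ℓ (r : ℕ) (c : ℕ)).rank := rfl

private lemma blockM_apply {R C : Type*} (L : R → C → ℕ) (x : R × Fin η) (y : C × Fin η) :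
    blockM η L x y =
      if (y.2 : ℕ) < L x.1 y.1 ∧ (x.2 : ℕ) = (y.2 : ℕ) + (η - L x.1 y.1) then 1 else 0 := rfl

private lemma blockM_indep {R C : Type*} (L : R → C → ℕ) (r₀ : R) (c₀ : C) {m : ℕ}
    (hm : L r₀ c₀ = m) (hmη : m ≤ η) :
    LinearIndependent (ZMod 2)
      (fun q : Fin m => (blockM η L)ᵀ (c₀, Fin.castLE hmη q)) := by
  rw [Fintype.linearIndependent_iff]
  intro g hg q
  have hrow : (q : ℕ) + (η - m) < η := by omega
  have hth := congrFun hg (r₀, ⟨(q : ℕ) + (η - m), hrow⟩)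
  have hterm : ∀ q' : Fin m,
      blockM η L (r₀, ⟨(q : ℕ) + (η - m), hrow⟩) (c₀, Fin.castLE hmη q') =
        if q' = q then 1 else 0 := by
    intro q'
    rw [blockM_apply, hm]
    by_cases h : q' = q
    · subst h
      simp [q'.isLt]
    · apply (if_neg _).trans (if_neg h).symm
      simp only [Fin.coe_castLE]
      rintro ⟨-, he⟩
      exact h (Fin.ext (by omega))
  simp only [Finset.sum_apply, Pi.smul_apply, Matrix.transpose_apply, smul_eq_mul, hterm,
    mul_ite, mul_one, mul_zero, Finset.sum_ite_eq', Finset.mem_univ, if_true,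
    Pi.zero_apply] at hth
  exact hth

private lemma blockM_rank_ge {R C : Type*} [Fintype R] [Fintype C]
    (L : R → C → ℕ) (r₀ : R) (c₀ : C) {m : ℕ} (hm : L r₀ c₀ = m) (hmη : m ≤ η) :
    m ≤ (blockM η L).rank := by
  rw [Matrix.rank_eq_finrank_span_cols]
  have hind := blockM_indep L r₀ c₀ hm hmη
  have h1 : finrank (ZMod 2)
      (span (ZMod 2) (Set.range fun q : Fin m => (blockM η L)ᵀ (c₀, Fin.castLE hmη q))) = m := by
    rw [finrank_span_eq_card hind, Fintype.card_fin]
  have h2 : span (ZMod 2) (Set.range fun q : Fin m => (blockM η L)ᵀ (c₀, Fin.castLE hmη q)) ≤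
      span (ZMod 2) (Set.range (blockM η L)ᵀ) := by
    apply span_mono
    rintro x ⟨q, rfl⟩
    exact ⟨(c₀, Fin.castLE hmη q), rfl⟩
  exact h1 ▸ Submodule.finrank_mono h2

private lemma rank_le_of_cols_in_span {ρ γ : Type*} [Fintype ρ] [Fintype γ]
    (A : Matrix ρ γ (ZMod 2)) {m : ℕ} (v : Fin m → ρ → ZMod 2)
    (h : ∀ c, Aᵀ c ∈ span (ZMod 2) (Set.range v)) : A.rank ≤ m := by
  rw [Matrix.rank_eq_finrank_span_cols]
  have h1 : span (ZMod 2) (Set.range Aᵀ) ≤ span (ZMod 2) (Set.range v) := by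
    rw [span_le]; rintro x ⟨c, rfl⟩; exact h c
  have h2 : finrank (ZMod 2) (span (ZMod 2) (Set.range v)) ≤ m := by
    exact (finrank_range_le_card (R := ZMod 2) v).trans_eq (Fintype.card_fin m)
  exact (Submodule.finrank_mono h1).trans h2

/-- columns of a block matrix in the column block `c₀` all lie in the span of
the first `m` of them, provided all `L r c₀ ≤ m`. -/
private lemma col_mem_span_initial {R C : Type*} (L : R → C → ℕ) (c₀ : C) {m : ℕ}
    (hub : ∀ r, L r c₀ ≤ m) (hmη : m ≤ η) (q : Fin η) :
    (blockM η L)ᵀ (c₀, q) ∈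
      span (ZMod 2) (Set.range fun q' : Fin m => (blockM η L)ᵀ (c₀, Fin.castLE hmη q')) := by
  by_cases hq : (q : ℕ) < m
  · apply subset_span
    exact ⟨⟨(q : ℕ), hq⟩, by congr 1⟩
  · have hz : (blockM η L)ᵀ (c₀, q) = 0 := by
      funext p
      have hcond : ¬((q : ℕ) < L p.1 c₀ ∧ (p.2 : ℕ) = (q : ℕ) + (η - L p.1 c₀)) :=
        fun hc => hq (lt_of_lt_of_le hc.1 (hub p.1))
      rw [Matrix.transpose_apply, blockM_apply]
      exact if_neg hcond
    rw [hz]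
    exact zero_mem _

private lemma blockM_rank_single {R C : Type*} [Fintype R] [Fintype C]
    (L : R → C → ℕ) (c₀ : C) (hsub : ∀ c : C, c = c₀) {m : ℕ}
    (hub : ∀ r, L r c₀ ≤ m) (hex : ∃ r, L r c₀ = m) (hmη : m ≤ η) :
    (blockM η L).rank = m := by
  obtain ⟨r₀, hr₀⟩ := hex
  refine le_antisymm ?_ (blockM_rank_ge L r₀ c₀ hr₀ hmη)
  apply rank_le_of_cols_in_span _ (fun q : Fin m => (blockM η L)ᵀ (c₀, Fin.castLE hmη q))
  rintro ⟨c, q⟩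
  rw [hsub c]
  exact col_mem_span_initial L c₀ hub hmη q

private lemma blockM_rank_restrict {R₁ R₂ C₁ C₂ : Type*}
    [Fintype R₁] [Fintype R₂] [Fintype C₁] [Fintype C₂]
    (φ : R₁ → R₂) (ψ : C₁ ≃ C₂) (L : R₂ → C₂ → ℕ) (c₀ : C₂)
    {m₁ m₂ : ℕ} (hm1 : m₁ ≤ η) (hm2 : m₂ ≤ η)
    (hrank2 : (blockM η L).rank = m₂) (hex2 : ∃ r, L r c₀ = m₂)
    (hub1 : ∀ r, L (φ r) c₀ ≤ m₁) (hex1 : ∃ r, L (φ r) c₀ = m₁) :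
    (blockM η fun r c => L (φ r) (ψ c)).rank = m₁ := by
  obtain ⟨r₂, hr₂⟩ := hex2
  obtain ⟨r₁, hr₁⟩ := hex1
  set L₁ : R₁ → C₁ → ℕ := fun r c => L (φ r) (ψ c) with hL₁
  refine le_antisymm ?_
    (blockM_rank_ge L₁ r₁ (ψ.symm c₀) (by simp only [hL₁, Equiv.apply_symm_apply]; exact hr₁) hm1)
  -- the span of all columns of `blockM η L` equals the span of the `c₀` block of columns
  set w : Fin η → (R₂ × Fin η → ZMod 2) := fun q => (blockM η L)ᵀ (c₀, q) with hw
  have hspan2 : span (ZMod 2) (Set.range w) = span (ZMod 2) (Set.range (blockM η L)ᵀ) := by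
    apply Submodule.eq_of_le_of_finrank_le
    · apply span_mono
      rintro x ⟨q, rfl⟩
      exact ⟨(c₀, q), rfl⟩
    · refine le_trans (le_of_eq ((Matrix.rank_eq_finrank_span_cols (blockM η L)).symm.trans hrank2)) ?_
      have hind := blockM_indep L r₂ c₀ hr₂ hm2
      have hle : span (ZMod 2)
          (Set.range fun q : Fin m₂ => (blockM η L)ᵀ (c₀, Fin.castLE hm2 q)) ≤
          span (ZMod 2) (Set.range w) := by
        apply span_mono
        rintro x ⟨q, rfl⟩
        exact ⟨Fin.castLE hm2 q, rfl⟩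
      have hcard : finrank (ZMod 2) (span (ZMod 2)
          (Set.range fun q : Fin m₂ => (blockM η L)ᵀ (c₀, Fin.castLE hm2 q))) = m₂ := by
        rw [finrank_span_eq_card hind, Fintype.card_fin]
      exact hcard ▸ Submodule.finrank_mono hle
  set π : ((R₂ × Fin η) → ZMod 2) →ₗ[ZMod 2] ((R₁ × Fin η) → ZMod 2) :=
    LinearMap.funLeft (ZMod 2) (ZMod 2) (Prod.map φ id) with hπ
  have hcol : ∀ (c : C₁) (q : Fin η), (blockM η L₁)ᵀ (c, q) = π ((blockM η L)ᵀ (ψ c, q)) := by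
    intro c q
    funext p
    rfl
  apply rank_le_of_cols_in_span _
    (fun q : Fin m₁ => (blockM η L₁)ᵀ (ψ.symm c₀, Fin.castLE hm1 q))
  rintro ⟨c, q⟩
  rw [hcol]
  have h1 : (blockM η L)ᵀ (ψ c, q) ∈ span (ZMod 2) (Set.range w) := by
    rw [hspan2]
    exact subset_span ⟨(ψ c, q), rfl⟩
  have h2 : π ((blockM η L)ᵀ (ψ c, q)) ∈ span (ZMod 2) (Set.range (π ∘ w)) := by
    rw [Set.range_comp, ← Submodule.map_span]
    exact Submodule.mem_map_of_mem h1
  refine Submodule.span_le.2 ?_ h2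
  rintro x ⟨q', rfl⟩
  have hub1' : ∀ r : R₁, L₁ r (ψ.symm c₀) ≤ m₁ := by
    intro r
    simp only [hL₁, Equiv.apply_symm_apply]
    exact hub1 r
  have hx : (⇑π ∘ w) q' = (blockM η L₁)ᵀ (ψ.symm c₀, q') := by
    have h3 := hcol (ψ.symm c₀) q'
    rw [Equiv.apply_symm_apply] at h3
    exact h3.symm
  rw [hx]
  exact col_mem_span_initial L₁ (ψ.symm c₀) hub1' hm1 q'

end Aux

private lemma mem_rowIdx_iff {n i : ℕ} {S : Finset ℕ} {r : ℕ} :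
    r ∈ rowIdx n (Finset.Icc i n) S ↔ r = 0 ∨ (1 ≤ r ∧ r ≤ n ∧ r < i ∧ r ∉ S) := by
  simp only [rowIdx, Finset.mem_insert, Finset.mem_sdiff, Finset.mem_Icc]
  constructor
  · rintro (rfl | ⟨⟨⟨ha, hb⟩, hc⟩, hd⟩)
    · exact Or.inl rfl
    · exact Or.inr ⟨ha, hb, by omega, hd⟩
  · rintro (rfl | ⟨ha, hb, hc, hd⟩)
    · exact Or.inl rfl
    · exact Or.inr ⟨⟨⟨ha, hb⟩, by omega⟩, hd⟩

theorem stmt19 (n η : ℕ) (hn : 1 ≤ n) (hη : 1 ≤ η) (ℓ : ℕ → ℕ → ℕ)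
    (hbound : ∀ i ≤ n, ∀ j ≤ n, ℓ i j ≤ η)
    (hds : ℓ 0 0 = 0) (hii : ∀ i, 1 ≤ i → i ≤ n → ℓ i i = 0)
    (hmono : ∀ i j, 1 ≤ i → i ≤ j → j ≤ n → ℓ i 0 ≤ ℓ j 0)
    (j : ℕ) (hj1 : 1 ≤ j) (hjn : j ≤ n)
    (h1 : ℓ j 0 = ℓ (j - 1) 0)
    (h2 : ℓ (j - 1) 0 = fRank n η ℓ (Finset.Icc j n) {j}) :
    (∀ i : ℕ, 1 ≤ i → i ≤ n + 1 →
        fRank n η ℓ (Finset.Icc i n) {j} = ℓ (i - 1) 0 ∧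
        ℓ (i - 1) 0 = fRank n η ℓ (Finset.Icc i n) ∅) ∧
      ∀ r : Fin (n + 2), Pmat n η ℓ r (j : Fin (n + 2)) = Pmat n η ℓ r (Fin.last (n + 1)) := by
  have hzero_mem : ∀ (Ω S : Finset ℕ), (0 : ℕ) ∈ rowIdx n Ω S :=
    fun Ω S => Finset.mem_insert_self _ _
  have hub : ∀ i, 1 ≤ i → i ≤ n + 1 → ∀ S : Finset ℕ, ∀ r : ℕ,
      r ∈ rowIdx n (Finset.Icc i n) S → ℓ r 0 ≤ ℓ (i - 1) 0 := by
    intro i hi1 hin S r hr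
    rcases mem_rowIdx_iff.1 hr with rfl | ⟨ha, hb, hc, -⟩
    · rw [hds]; exact Nat.zero_le _
    · exact hmono r (i - 1) ha (by omega) (by omega)
  have hmle : ∀ i, i ≤ n + 1 → ℓ (i - 1) 0 ≤ η := fun i hi => hbound (i - 1) (by omega) 0 (by omega)
  have hexe : ∀ i, 1 ≤ i → i ≤ n + 1 →
      ∃ r, r ∈ rowIdx n (Finset.Icc i n) ∅ ∧ ℓ r 0 = ℓ (i - 1) 0 := by
    intro i hi1 hin
    rcases Nat.lt_or_ge i 2 with hi2 | hi2
    · have hi : i = 1 := by omega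
      subst hi
      exact ⟨0, hzero_mem _ _, rfl⟩
    · exact ⟨i - 1, mem_rowIdx_iff.2 (Or.inr ⟨by omega, by omega, by omega,
        Finset.notMem_empty _⟩), rfl⟩
  have hexj : ∀ i, 1 ≤ i → i ≤ n + 1 →
      ∃ r, r ∈ rowIdx n (Finset.Icc i n) {j} ∧ ℓ r 0 = ℓ (i - 1) 0 := by
    intro i hi1 hin
    by_cases hij : i - 1 = j
    · rcases Nat.lt_or_ge j 2 with hj2 | hj2
      · have hj1' : j = 1 := by omega
        refine ⟨0, hzero_mem _ _, ?_⟩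
        rw [hij, hj1']
        rw [hj1'] at h1
        norm_num at h1
        exact h1.symm
      · refine ⟨j - 1, mem_rowIdx_iff.2 (Or.inr ⟨by omega, by omega, by omega, by
          simp only [Finset.mem_singleton]; omega⟩), ?_⟩
        rw [hij]
        exact h1.symm
    · rcases Nat.lt_or_ge i 2 with hi2 | hi2
      · have hi : i = 1 := by omega
        subst hi
        exact ⟨0, hzero_mem _ _, rfl⟩
      · exact ⟨i - 1, mem_rowIdx_iff.2 (Or.inr ⟨by omega, by omega, by omega, by
          simp only [Finset.mem_singleton]; exact hij⟩), rfl⟩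
  have hempty : ∀ i, 1 ≤ i → i ≤ n + 1 → fRank n η ℓ (Finset.Icc i n) ∅ = ℓ (i - 1) 0 := by
    intro i hi1 hin
    obtain ⟨r₀, hr₀m, hr₀v⟩ := hexe i hi1 hin
    rw [fRank_eq_blockM]
    refine blockM_rank_single _ ⟨0, Finset.mem_insert_self _ _⟩ ?_ ?_
      ⟨⟨r₀, hr₀m⟩, hr₀v⟩ (hmle i hin)
    · rintro ⟨c, hc⟩
      apply Subtype.ext
      simp only [colIdx, Finset.inter_empty, Finset.mem_insert,
        Finset.notMem_empty, or_false] at hc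
      exact hc
    · rintro ⟨r, hr⟩
      exact hub i hi1 hin ∅ r hr
  have hkey1 : ∀ i, 1 ≤ i → i ≤ n + 1 → fRank n η ℓ (Finset.Icc i n) {j} = ℓ (i - 1) 0 := by
    intro i hi1 hin
    obtain ⟨r₀, hr₀m, hr₀v⟩ := hexj i hi1 hin
    rcases Nat.lt_or_ge j i with hij | hij
    · rw [fRank_eq_blockM]
      refine blockM_rank_single _ ⟨0, Finset.mem_insert_self _ _⟩ ?_ ?_
        ⟨⟨r₀, hr₀m⟩, hr₀v⟩ (hmle i hin)
      · rintro ⟨c, hc⟩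
        apply Subtype.ext
        simp only [colIdx, Finset.mem_insert, Finset.mem_inter, Finset.mem_Icc,
          Finset.mem_singleton] at hc
        rcases hc with rfl | ⟨⟨hci, -⟩, rfl⟩
        · rfl
        · omega
      · rintro ⟨r, hr⟩
        exact hub i hi1 hin {j} r hr
    · have hsubset : rowIdx n (Finset.Icc i n) {j} ⊆ rowIdx n (Finset.Icc j n) {j} := by
        intro r hr
        rcases mem_rowIdx_iff.1 hr with rfl | ⟨ha, hb, hc, hd⟩
        · exact hzero_mem _ _
        · exact mem_rowIdx_iff.2 (Or.inr ⟨ha, hb, by omega, hd⟩)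
      have hceq : ∀ x : ℕ, x ∈ colIdx (Finset.Icc i n) {j} ↔ x ∈ colIdx (Finset.Icc j n) {j} := by
        intro x
        simp only [colIdx, Finset.mem_insert, Finset.mem_inter, Finset.mem_Icc,
          Finset.mem_singleton]
        omega
      obtain ⟨r₂, hr₂m, hr₂v⟩ := hexj j hj1 (by omega)
      rw [fRank_eq_blockM]
      exact blockM_rank_restrict
        (fun r : ↥(rowIdx n (Finset.Icc i n) {j}) =>
          (⟨(r : ℕ), hsubset r.2⟩ : ↥(rowIdx n (Finset.Icc j n) {j})))
        (Equiv.subtypeEquivRight hceq)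
        (fun (r : ↥(rowIdx n (Finset.Icc j n) {j})) (c : ↥(colIdx (Finset.Icc j n) {j})) =>
          ℓ (r : ℕ) (c : ℕ))
        ⟨0, Finset.mem_insert_self _ _⟩
        (hmle i hin) (hmle j (by omega))
        (by rw [← fRank_eq_blockM]; exact h2.symm)
        ⟨⟨r₂, hr₂m⟩, hr₂v⟩
        (fun r => hub i hi1 hin {j} (r : ℕ) r.2)
        ⟨⟨r₀, hr₀m⟩, hr₀v⟩
  have key : ∀ i : ℕ, 1 ≤ i → i ≤ n + 1 →
      fRank n η ℓ (Finset.Icc i n) {j} = ℓ (i - 1) 0 ∧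
      ℓ (i - 1) 0 = fRank n η ℓ (Finset.Icc i n) ∅ :=
    fun i h h' => ⟨hkey1 i h h', (hempty i h h').symm⟩
  refine ⟨key, ?_⟩
  intro r
  have hjv : ((j : Fin (n + 2)) : ℕ) = j := Fin.val_cast_of_lt (by omega)
  by_cases hr : (r : ℕ) = 0
  · simp only [Pmat, Matrix.of_apply, hr, hjv, Fin.val_last, if_pos rfl]
    simp
    omega
  · simp only [Pmat, Matrix.of_apply, hjv, Fin.val_last, if_neg hr]
    rw [if_neg (by omega : ¬(j = 0)), if_neg (by omega : ¬(n + 1 = 0)),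
      if_neg (by omega : ¬(j = n + 1))]
    simp only [if_true]
    obtain ⟨e1, e2⟩ := key (r : ℕ) (by omega) (by omega)
    rw [e1, e2]
end
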